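/- arXiv:1208.5522 — 3 statements merged into one kernel-verified Lean document; each statement's English description precedes it below -/
import Mathlib

section
/- Let X, Y be metric spaces, g, h Hausdorff functions and Δ a scale. If E ⊆ X × Y is compact, then the mapping x ↦ lboxm^g_0(E_x) is Borel measurable and pack^{gh}_{Δ,0}(E) ≥ ∫ lboxm^g_0(E_x) d pack^h_Δ(x). -/
open Filter MeasureTheory Set
open scoped ENNReal NNReal Topology

namespace ZPaper

variable {X : Type*} [MetricSpace X] {Y : Type*} [MetricSpace Y]

/-- The `δ`-capacity of a set `E`: the supremum of cardinalities of subsets of `E`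
whose points are mutually more than `δ` apart. -/
noncomputable def capacity (δ : ℝ) (E : Set X) : ℝ≥0∞ :=
  ⨆ (F : Finset X) (_ : ↑F ⊆ E ∧ ∀ x ∈ F, ∀ y ∈ F, x ≠ y → δ < dist x y),
    (F.card : ℝ≥0∞)

/-- Lower box (Minkowski) dimension: `liminf_{δ→0} log C_δ(E) / |log δ|`. -/
noncomputable def lbdim (E : Set X) : EReal :=
  Filter.liminf (fun δ : ℝ => (capacity δ E).log / ((|Real.log δ| : ℝ) : EReal)) (𝓝[>] (0:ℝ))

/-- Upper box (Minkowski) dimension: `limsup_{δ→0} log C_δ(E) / |log δ|`. -/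
noncomputable def ubdim (E : Set X) : EReal :=
  Filter.limsup (fun δ : ℝ => (capacity δ E).log / ((|Real.log δ| : ℝ) : EReal)) (𝓝[>] (0:ℝ))

/-- Upper packing dimension: infimum of `sup_n ubdim Eₙ` over countable covers of `E`. -/
noncomputable def updim (E : Set X) : EReal :=
  ⨅ (A : ℕ → Set X) (_ : E ⊆ ⋃ n, A n), ⨆ n, ubdim (A n)

/-- Lower packing dimension: infimum of `sup_n lbdim Eₙ` over countable covers of `E`. -/
noncomputable def lpdim (E : Set X) : EReal :=
  ⨅ (A : ℕ → Set X) (_ : E ⊆ ⋃ n, A n), ⨆ n, lbdim (A n)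

/-- Directed lower packing dimension: infimum of `sup_n lbdim Eₙ` over increasing
sequences with union `E`. -/
noncomputable def dpdim (E : Set X) : EReal :=
  ⨅ (A : ℕ → Set X) (_ : Monotone A ∧ (⋃ n, A n) = E), ⨆ n, lbdim (A n)

/-- A packing: a family of pairs (center, radius) with positive radii such that
`d(x_i, x_j) > r_i` for distinct members. -/
def IsPacking (π : Set (X × ℝ)) : Prop :=
  (∀ p ∈ π, 0 < p.2) ∧ ∀ p ∈ π, ∀ q ∈ π, p ≠ q → p.2 < dist p.1 q.1

/-- A packing of a set `E`: all centers belong to `E`. -/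
def IsPackingOf (π : Set (X × ℝ)) (E : Set X) : Prop :=
  IsPacking π ∧ ∀ p ∈ π, p.1 ∈ E

/-- A uniform packing: all radii equal. -/
def IsUniform (π : Set (X × ℝ)) : Prop := ∀ p ∈ π, ∀ q ∈ π, p.2 = q.2

/-- A scale: a set of positive reals with `0` in its closure. -/
def IsScale (Δ : Set ℝ) : Prop := Δ ⊆ Set.Ioi (0:ℝ) ∧ (0:ℝ) ∈ closure Δ

/-- A `(Δ,δ)`-packing of `E`: a packing of `E` with radii in `Δ ∩ (0, δ]`. -/
def IsScaledPacking (Δ : Set ℝ) (δ : ℝ) (π : Set (X × ℝ)) (E : Set X) : Prop :=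
  IsPackingOf π E ∧ ∀ p ∈ π, p.2 ∈ Δ ∧ p.2 ≤ δ

/-- `g(π) = Σ_i g(r_i)` for a packing `π`. -/
noncomputable def packVal (g : ℝ → ℝ) (π : Set (X × ℝ)) : ℝ≥0∞ :=
  ∑' p : π, ENNReal.ofReal (g p.1.2)

/-- `pack^g_{Δ,δ}(E) = sup{g(π) : π a (Δ,δ)-packing of E}`. -/
noncomputable def packPre (g : ℝ → ℝ) (Δ : Set ℝ) (δ : ℝ) (E : Set X) : ℝ≥0∞ :=
  ⨆ (π : Set (X × ℝ)) (_ : IsScaledPacking Δ δ π E), packVal g π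

/-- `pack^g_{Δ,0}(E) = inf_{δ>0} pack^g_{Δ,δ}(E)`. -/
noncomputable def packPre0 (g : ℝ → ℝ) (Δ : Set ℝ) (E : Set X) : ℝ≥0∞ :=
  ⨅ (δ : ℝ) (_ : 0 < δ), packPre g Δ δ E

/-- Uniform-packing (box) variant of `packPre`. -/
noncomputable def boxPre (g : ℝ → ℝ) (Δ : Set ℝ) (δ : ℝ) (E : Set X) : ℝ≥0∞ :=
  ⨆ (π : Set (X × ℝ)) (_ : IsScaledPacking Δ δ π E ∧ IsUniform π), packVal g π

/-- `boxm^g_{Δ,0}(E) = inf_{δ>0} boxm^g_{Δ,δ}(E)`. -/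
noncomputable def boxPre0 (g : ℝ → ℝ) (Δ : Set ℝ) (E : Set X) : ℝ≥0∞ :=
  ⨅ (δ : ℝ) (_ : 0 < δ), boxPre g Δ δ E

/-- Munroe's Method I construction. -/
noncomputable def methodI (τ : Set X → ℝ≥0∞) (E : Set X) : ℝ≥0∞ :=
  ⨅ (A : ℕ → Set X) (_ : E ⊆ ⋃ n, A n), ∑' n, τ (A n)

/-- The "directed" Method D construction. -/
noncomputable def methodD (τ : Set X → ℝ≥0∞) (E : Set X) : ℝ≥0∞ :=
  ⨅ (A : ℕ → Set X) (_ : Monotone A ∧ (⋃ n, A n) = E), ⨆ n, τ (A n)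

/-- The `Δ`-packing measure `pack^g_Δ` (Method I of `pack^g_{Δ,0}`). -/
noncomputable def packMeasure (g : ℝ → ℝ) (Δ : Set ℝ) : Set X → ℝ≥0∞ :=
  methodI (packPre0 g Δ)

/-- The `Δ`-box measure `boxm^g_Δ` (Method I of `boxm^g_{Δ,0}`). -/
noncomputable def boxMeasure (g : ℝ → ℝ) (Δ : Set ℝ) : Set X → ℝ≥0∞ :=
  methodI (boxPre0 g Δ)

/-- The upper packing pre-measure `upack^g_0 = pack^g_{(0,∞),0}`. -/
noncomputable def upackPre0 (g : ℝ → ℝ) : Set X → ℝ≥0∞ :=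
  packPre0 g (Set.Ioi (0:ℝ))

/-- The upper packing (= packing) measure `upack^g`. -/
noncomputable def upack (g : ℝ → ℝ) : Set X → ℝ≥0∞ :=
  methodI (upackPre0 g)

/-- The lower packing pre-measure `lpack^g_0(E) = inf_Δ pack^g_{Δ,0}(E)`. -/
noncomputable def lpackPre0 (g : ℝ → ℝ) (E : Set X) : ℝ≥0∞ :=
  ⨅ (Δ : Set ℝ) (_ : IsScale Δ), packPre0 g Δ E

/-- The lower packing measure `lpack^g`. -/
noncomputable def lpack (g : ℝ → ℝ) : Set X → ℝ≥0∞ :=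
  methodI (lpackPre0 g)

/-- The directed lower packing set function `dpack^g` (Method D of `lpack^g_0`). -/
noncomputable def dpack (g : ℝ → ℝ) : Set X → ℝ≥0∞ :=
  methodD (lpackPre0 g)

/-- The lower box (Hewitt–Stromberg) pre-measure `lboxm^g_0(E) = liminf_{δ→0} C_δ(E)·g(δ)`. -/
noncomputable def lboxPre0 (g : ℝ → ℝ) (E : Set X) : ℝ≥0∞ :=
  Filter.liminf (fun δ : ℝ => capacity δ E * ENNReal.ofReal (g δ)) (𝓝[>] (0:ℝ))

/-- The upper box pre-measure `uboxm^g_0(E) = limsup_{δ→0} C_δ(E)·g(δ)`. -/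
noncomputable def uboxPre0 (g : ℝ → ℝ) (E : Set X) : ℝ≥0∞ :=
  Filter.limsup (fun δ : ℝ => capacity δ E * ENNReal.ofReal (g δ)) (𝓝[>] (0:ℝ))

/-- The lower box (Hewitt–Stromberg) measure `lboxm^g`. -/
noncomputable def lbox (g : ℝ → ℝ) : Set X → ℝ≥0∞ := methodI (lboxPre0 g)

/-- The upper box measure `uboxm^g`. -/
noncomputable def ubox (g : ℝ → ℝ) : Set X → ℝ≥0∞ := methodI (uboxPre0 g)

/-- The directed lower box set function `dboxm^g` (Method D of `lboxm^g_0`). -/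
noncomputable def dbox (g : ℝ → ℝ) : Set X → ℝ≥0∞ := methodD (lboxPre0 g)

/-- A Hausdorff function: a nondecreasing positive function on `(0,∞)`. -/
def IsHausdorffFunction (g : ℝ → ℝ) : Prop :=
  MonotoneOn g (Set.Ioi (0:ℝ)) ∧ ∀ r : ℝ, 0 < r → 0 < g r

/-- `f ≺ g`: `lim_{r→0⁺} f(r)/g(r) = 0`. -/
def HPrec (f g : ℝ → ℝ) : Prop :=
  Tendsto (fun r => f r / g r) (𝓝[>] (0:ℝ)) (𝓝 0)

/-- The section `E_x = {y : (x,y) ∈ E}` of a set `E ⊆ X × Y`. -/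
def sect (E : Set (X × Y)) (x : X) : Set Y := {y | (x, y) ∈ E}

/-- The integral of a nonnegative function against a set function, via the usual
supremum over Borel simple functions (for a Borel measure this is the Lebesgue integral). -/
noncomputable def sLintegral (τ : Set X → ℝ≥0∞) (f : X → ℝ≥0∞) : ℝ≥0∞ :=
  letI := borel X
  ⨆ (s : SimpleFunc X ℝ≥0∞) (_ : ∀ x, s x ≤ f x), ∑ y ∈ s.range, y * τ (⇑s ⁻¹' {y})

/-- The upper integral `∫* f dτ = inf{∫ φ dτ : φ ≥ f Borel measurable}`. -/
noncomputable def upperIntegral (τ : Set X → ℝ≥0∞) (f : X → ℝ≥0∞) : ℝ≥0∞ :=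
  letI := borel X
  ⨅ (φ : X → ℝ≥0∞) (_ : ∀ x, f x ≤ φ x) (_ : Measurable φ), sLintegral τ φ

/-- `(Q,m)`-homogeneity of a set `A`: `C_r(E) ≤ Q (diam E / r)^m` for all `E ⊆ A`
and all `0 < r ≤ diam E`. -/
def IsHomog (Q m : ℝ) (A : Set X) : Prop :=
  ∀ E : Set X, E ⊆ A → ∀ r : ℝ, 0 < r → ENNReal.ofReal r ≤ EMetric.diam E →
    capacity r E ≤ ENNReal.ofReal Q * (EMetric.diam E / ENNReal.ofReal r) ^ m

/-- The Assouad dimension of a set. -/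
noncomputable def adim (A : Set X) : ℝ≥0∞ :=
  ⨅ (m : ℝ) (_ : 0 < m ∧ ∃ Q : ℝ, 0 ≤ Q ∧ IsHomog Q m A), ENNReal.ofReal m

/-- The countably stable modification of the Assouad dimension. -/
noncomputable def sadim (A : Set X) : ℝ≥0∞ :=
  ⨅ (S : ℕ → Set X) (_ : A ⊆ ⋃ n, S n), ⨆ n, adim (S n)

/-- The upper packing dimension of a Borel measure. -/
noncomputable def updimM {Z : Type*} [MetricSpace Z] [MeasurableSpace Z]
    (μ : Measure Z) : EReal :=
  ⨅ (E : Set Z) (_ : MeasurableSet[borel Z] E ∧ 0 < μ E), updim E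

/-- The lower packing dimension of a Borel measure. -/
noncomputable def lpdimM {Z : Type*} [MetricSpace Z] [MeasurableSpace Z]
    (μ : Measure Z) : EReal :=
  ⨅ (E : Set Z) (_ : MeasurableSet[borel Z] E ∧ 0 < μ E), lpdim E

/-- Euclidean space `ℝ^m`. -/
abbrev Euc (m : ℕ) := EuclideanSpace ℝ (Fin m)

end ZPaper
open Filter MeasureTheory Set ZPaper
open scoped ENNReal NNReal Topology


section Stmt7Aux

open scoped Classical

namespace Stmt7

variable {X : Type*} [MetricSpace X] {Y : Type*} [MetricSpace Y]

/-! ### Finite packings -/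

/-- A finite `(Δ,δ)`-packing of `S`, as a `Finset`. -/
def FinPack (Δ : Set ℝ) (δ : ℝ) (F : Finset (X × ℝ)) (S : Set X) : Prop :=
  (∀ p ∈ F, p.1 ∈ S ∧ p.2 ∈ Δ ∧ 0 < p.2 ∧ p.2 ≤ δ) ∧
  ∀ p ∈ F, ∀ q ∈ F, p ≠ q → p.2 < dist p.1 q.1

lemma FinPack.mono_set {Δ : Set ℝ} {δ : ℝ} {F : Finset (X × ℝ)} {S T : Set X}
    (h : FinPack Δ δ F S) (hST : S ⊆ T) : FinPack Δ δ F T :=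
  ⟨fun p hp => ⟨hST (h.1 p hp).1, (h.1 p hp).2⟩, h.2⟩

lemma FinPack.mono_delta {Δ : Set ℝ} {δ δ' : ℝ} {F : Finset (X × ℝ)} {S : Set X}
    (h : FinPack Δ δ F S) (hδ : δ ≤ δ') : FinPack Δ δ' F S :=
  ⟨fun p hp => ⟨(h.1 p hp).1, (h.1 p hp).2.1, (h.1 p hp).2.2.1, (h.1 p hp).2.2.2.trans hδ⟩, h.2⟩

lemma FinPack.isScaledPacking {Δ : Set ℝ} {δ : ℝ} {F : Finset (X × ℝ)} {S : Set X}
    (h : FinPack Δ δ F S) : IsScaledPacking Δ δ (↑F : Set (X × ℝ)) S := by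
  refine ⟨⟨⟨fun p hp => (h.1 p hp).2.2.1, fun p hp q hq hpq => h.2 p hp q hq hpq⟩,
    fun p hp => (h.1 p hp).1⟩, fun p hp => ⟨(h.1 p hp).2.1, (h.1 p hp).2.2.2⟩⟩

lemma packVal_coe_finset (g : ℝ → ℝ) (F : Finset (X × ℝ)) :
    packVal g (↑F : Set (X × ℝ)) = ∑ p ∈ F, ENNReal.ofReal (g p.2) := by
  rw [packVal]
  exact Finset.tsum_subtype F (fun p => ENNReal.ofReal (g p.2))

lemma le_packPre_of_finPack (g : ℝ → ℝ) {Δ : Set ℝ} {δ : ℝ} {F : Finset (X × ℝ)} {S : Set X}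
    (h : FinPack Δ δ F S) :
    (∑ p ∈ F, ENNReal.ofReal (g p.2)) ≤ packPre g Δ δ S := by
  rw [← packVal_coe_finset]
  exact le_iSup₂ (f := fun π (_ : IsScaledPacking Δ δ π S) => packVal g π)
    (↑F : Set (X × ℝ)) h.isScaledPacking

lemma packPre_le_iSup_finPack (g : ℝ → ℝ) (Δ : Set ℝ) (δ : ℝ) (S : Set X) :
    packPre g Δ δ S ≤
      ⨆ (F : Finset (X × ℝ)) (_ : FinPack Δ δ F S), ∑ p ∈ F, ENNReal.ofReal (g p.2) := by
  refine iSup₂_le fun π hπ => ?_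
  rw [packVal, ENNReal.tsum_eq_iSup_sum]
  refine iSup_le fun σ => ?_
  have hmap : ∑ q ∈ σ, ENNReal.ofReal (g (q : X × ℝ).2)
      = ∑ p ∈ σ.map (Function.Embedding.subtype _), ENNReal.ofReal (g p.2) := by
    rw [Finset.sum_map]; rfl
  rw [hmap]
  refine le_iSup₂ (f := fun F (_ : FinPack Δ δ F S) => ∑ p ∈ F, ENNReal.ofReal (g p.2))
    (σ.map (Function.Embedding.subtype _)) ?_
  constructor
  · intro p hp
    rw [Finset.mem_map] at hp
    obtain ⟨q, _, rfl⟩ := hp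
    exact ⟨hπ.1.2 _ q.2, (hπ.2 _ q.2).1, hπ.1.1.1 _ q.2, (hπ.2 _ q.2).2⟩
  · intro p hp q hq hpq
    rw [Finset.mem_map] at hp hq
    obtain ⟨p', _, rfl⟩ := hp
    obtain ⟨q', _, rfl⟩ := hq
    exact hπ.1.1.2 _ p'.2 _ q'.2 hpq

lemma packPre_eq_iSup_finPack (g : ℝ → ℝ) (Δ : Set ℝ) (δ : ℝ) (S : Set X) :
    packPre g Δ δ S =
      ⨆ (F : Finset (X × ℝ)) (_ : FinPack Δ δ F S), ∑ p ∈ F, ENNReal.ofReal (g p.2) :=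
  le_antisymm (packPre_le_iSup_finPack g Δ δ S)
    (iSup₂_le fun _ hF => le_packPre_of_finPack g hF)

lemma packPre_mono_set (g : ℝ → ℝ) (Δ : Set ℝ) (δ : ℝ) {S T : Set X} (h : S ⊆ T) :
    packPre g Δ δ S ≤ packPre g Δ δ T := by
  refine iSup₂_le fun π hπ => ?_
  refine le_iSup₂ (f := fun π (_ : IsScaledPacking Δ δ π T) => packVal g π) π ?_
  exact ⟨⟨hπ.1.1, fun p hp => h (hπ.1.2 p hp)⟩, hπ.2⟩

lemma packPre_mono_delta (g : ℝ → ℝ) (Δ : Set ℝ) {δ δ' : ℝ} (h : δ ≤ δ') (S : Set X) :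
    packPre g Δ δ S ≤ packPre g Δ δ' S := by
  refine iSup₂_le fun π hπ => ?_
  refine le_iSup₂ (f := fun π (_ : IsScaledPacking Δ δ' π S) => packVal g π) π ?_
  exact ⟨hπ.1, fun p hp => ⟨(hπ.2 p hp).1, (hπ.2 p hp).2.trans h⟩⟩

lemma packPre0_le (g : ℝ → ℝ) (Δ : Set ℝ) {δ : ℝ} (hδ : 0 < δ) (S : Set X) :
    packPre0 g Δ S ≤ packPre g Δ δ S :=
  iInf₂_le δ hδ

lemma packPre_empty (g : ℝ → ℝ) (Δ : Set ℝ) (δ : ℝ) :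
    packPre g Δ δ (∅ : Set X) = 0 := by
  refine le_antisymm (iSup₂_le fun π hπ => ?_) (zero_le)
  have : π = ∅ := by
    ext p
    simp only [Set.mem_empty_iff_false, iff_false]
    intro hp
    exact (hπ.1.2 p hp)
  subst this
  simp [packVal, tsum_empty]

lemma packPre0_empty (g : ℝ → ℝ) (Δ : Set ℝ) :
    packPre0 g Δ (∅ : Set X) = 0 := by
  refine le_antisymm ?_ (zero_le)
  refine (iInf₂_le 1 one_pos).trans ?_
  rw [packPre_empty]

lemma packPre0_mono_set (g : ℝ → ℝ) (Δ : Set ℝ) {S T : Set X} (h : S ⊆ T) :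
    packPre0 g Δ S ≤ packPre0 g Δ T :=
  le_iInf₂ fun δ hδ => (iInf₂_le δ hδ).trans (packPre_mono_set g Δ δ h)


set_option linter.unusedSectionVars false

lemma isScaledPacking_empty (Δ : Set ℝ) (δ : ℝ) (S : Set X) :
    IsScaledPacking Δ δ (∅ : Set (X × ℝ)) S := by
  refine ⟨⟨⟨fun p hp => absurd hp (Set.notMem_empty p), fun p hp => absurd hp (Set.notMem_empty p)⟩,
    fun p hp => absurd hp (Set.notMem_empty p)⟩, fun p hp => absurd hp (Set.notMem_empty p)⟩

lemma finPack_closure_le (g : ℝ → ℝ) {Δ : Set ℝ} {δ : ℝ} {S : Set X} {F : Finset (X × ℝ)}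
    (hF : FinPack Δ δ F (closure S)) :
    (∑ p ∈ F, ENNReal.ofReal (g p.2)) ≤ packPre g Δ δ S := by
  classical
  set P := (F ×ˢ F).filter (fun pq : (X × ℝ) × (X × ℝ) => pq.1 ≠ pq.2) with hPdef
  set ε : ℝ :=
    (if h : P.Nonempty then min 1 (P.inf' h fun pq => dist pq.1.1 pq.2.1 - pq.1.2) else 1) / 2
    with hεdef
  have hgap : ∀ pq ∈ P, 0 < dist pq.1.1 pq.2.1 - pq.1.2 := by
    intro pq hpq
    rw [hPdef, Finset.mem_filter, Finset.mem_product] at hpq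
    have := hF.2 pq.1 hpq.1.1 pq.2 hpq.1.2 hpq.2
    linarith
  have hεpos : 0 < ε := by
    rw [hεdef]
    have : (0:ℝ) < (if h : P.Nonempty then
        min 1 (P.inf' h fun pq => dist pq.1.1 pq.2.1 - pq.1.2) else 1) := by
      split
      · rename_i h
        refine lt_min one_pos ?_
        rw [Finset.lt_inf'_iff]
        intro pq hpq
        exact hgap pq hpq
      · exact one_pos
    linarith
  have hεle : ∀ p ∈ F, ∀ q ∈ F, p ≠ q → 2 * ε ≤ dist p.1 q.1 - p.2 := by
    intro p hp q hq hpq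
    have hmem : (p, q) ∈ P := by
      rw [hPdef, Finset.mem_filter, Finset.mem_product]
      exact ⟨⟨hp, hq⟩, hpq⟩
    have hne : P.Nonempty := ⟨(p, q), hmem⟩
    have h1 : (P.inf' hne fun pq => dist pq.1.1 pq.2.1 - pq.1.2) ≤ dist p.1 q.1 - p.2 :=
      Finset.inf'_le _ hmem
    rw [hεdef]
    simp only [hne, dif_pos]
    have := min_le_right 1 (P.inf' hne fun pq => dist pq.1.1 pq.2.1 - pq.1.2)
    linarith
  rcases F.eq_empty_or_nonempty with hFe | hFne
  · subst hFe
    simp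
  have hSne : S.Nonempty := by
    obtain ⟨p, hp⟩ := hFne
    have := (hF.1 p hp).1
    rcases closure_nonempty_iff.mp ⟨p.1, this⟩ with ⟨x, hx⟩
    exact ⟨x, hx⟩
  obtain ⟨x0, hx0⟩ := hSne
  have hex : ∀ p : X × ℝ, ∃ x, x ∈ S ∧ (p ∈ F → dist p.1 x < ε) := by
    intro p
    by_cases hp : p ∈ F
    · have := (hF.1 p hp).1
      rw [Metric.mem_closure_iff] at this
      obtain ⟨x, hxS, hxd⟩ := this ε hεpos
      exact ⟨x, hxS, fun _ => hxd⟩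
    · exact ⟨x0, hx0, fun h => absurd h hp⟩
  choose c hcS' hcd' using hex
  have hcS : ∀ p ∈ F, c p ∈ S := fun p _ => hcS' p
  have hcd : ∀ p ∈ F, dist p.1 (c p) < ε := fun p hp => hcd' p hp
  have hinj : Set.InjOn (fun p : X × ℝ => (c p, p.2)) ↑F := by
    intro p hp q hq heq
    by_contra hne
    have h1 : 2 * ε ≤ dist p.1 q.1 - p.2 := hεle p hp q hq hne
    have h2 : p.2 ∈ Set.Ioi (0:ℝ) ∨ True := Or.inr trivial
    have hpos : 0 < p.2 := (hF.1 p hp).2.2.1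
    have e1 : c p = c q := congrArg Prod.fst heq
    have t1 : dist p.1 q.1 ≤ dist p.1 (c p) + dist (c p) q.1 := dist_triangle _ _ _
    have t2 : dist (c p) q.1 = dist q.1 (c q) := by rw [e1, dist_comm]
    have d1 : dist p.1 (c p) < ε := hcd p hp
    have d2 : dist q.1 (c q) < ε := hcd q hq
    linarith
  have hsum : ∑ p' ∈ F.image (fun p : X × ℝ => (c p, p.2)), ENNReal.ofReal (g p'.2)
      = ∑ p ∈ F, ENNReal.ofReal (g p.2) := by
    rw [Finset.sum_image (fun x hx y hy h => hinj hx hy h)]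
  rw [← hsum]
  refine le_packPre_of_finPack g ?_
  constructor
  · intro p' hp'
    rw [Finset.mem_image] at hp'
    obtain ⟨p, hp, rfl⟩ := hp'
    exact ⟨hcS p hp, (hF.1 p hp).2.1, (hF.1 p hp).2.2.1, (hF.1 p hp).2.2.2⟩
  · intro p' hp' q' hq' hne'
    rw [Finset.mem_image] at hp' hq'
    obtain ⟨p, hp, rfl⟩ := hp'
    obtain ⟨q, hq, rfl⟩ := hq'
    have hpq : p ≠ q := fun h => hne' (by rw [h])
    have h1 : 2 * ε ≤ dist p.1 q.1 - p.2 := hεle p hp q hq hpq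
    have t1 : dist p.1 q.1 ≤ dist p.1 (c p) + dist (c p) (c q) + dist (c q) q.1 := by
      calc dist p.1 q.1 ≤ dist p.1 (c q) + dist (c q) q.1 := dist_triangle _ _ _
        _ ≤ (dist p.1 (c p) + dist (c p) (c q)) + dist (c q) q.1 :=
            add_le_add_left (dist_triangle _ _ _) _
    have d1 : dist p.1 (c p) < ε := hcd p hp
    have d2 : dist (c q) q.1 < ε := by
      rw [dist_comm]
      exact hcd q hq
    have : (p.2 : ℝ) < dist (c p) (c q) := by linarith
    simpa using this

lemma packPre_closure (g : ℝ → ℝ) (Δ : Set ℝ) (δ : ℝ) (S : Set X) :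
    packPre g Δ δ (closure S) = packPre g Δ δ S :=
  le_antisymm ((packPre_le_iSup_finPack g Δ δ (closure S)).trans
      (iSup₂_le fun _ hF => finPack_closure_le g hF))
    (packPre_mono_set g Δ δ subset_closure)

lemma packPre0_closure (g : ℝ → ℝ) (Δ : Set ℝ) (S : Set X) :
    packPre0 g Δ (closure S) = packPre0 g Δ S := by
  rw [packPre0, packPre0]
  exact iInf_congr fun δ => iInf_congr fun _ => packPre_closure g Δ δ S

lemma isScaledPacking_union {Δ : Set ℝ} {δ : ℝ} {π₁ π₂ : Set (X × ℝ)} {S T : Set X} {r : ℝ}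
    (h₁ : IsScaledPacking Δ δ π₁ S) (h₂ : IsScaledPacking Δ δ π₂ T)
    (hδr : δ < r) (hST : ∀ x ∈ S, ∀ y ∈ T, r ≤ dist x y) :
    IsScaledPacking Δ δ (π₁ ∪ π₂) (S ∪ T) := by
  refine ⟨⟨⟨?_, ?_⟩, ?_⟩, ?_⟩
  · rintro p (hp|hp)
    exacts [h₁.1.1.1 p hp, h₂.1.1.1 p hp]
  · rintro p hp q hq hpq
    rcases hp with hp|hp <;> rcases hq with hq|hq
    · exact h₁.1.1.2 p hp q hq hpq
    · calc p.2 ≤ δ := (h₁.2 p hp).2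
        _ < r := hδr
        _ ≤ dist p.1 q.1 := hST p.1 (h₁.1.2 p hp) q.1 (h₂.1.2 q hq)
    · calc p.2 ≤ δ := (h₂.2 p hp).2
        _ < r := hδr
        _ ≤ dist p.1 q.1 := by
            rw [dist_comm]
            exact hST q.1 (h₁.1.2 q hq) p.1 (h₂.1.2 p hp)
    · exact h₂.1.1.2 p hp q hq hpq
  · rintro p (hp|hp)
    exacts [Or.inl (h₁.1.2 p hp), Or.inr (h₂.1.2 p hp)]
  · rintro p (hp|hp)
    exacts [h₁.2 p hp, h₂.2 p hp]

lemma packVal_union (g : ℝ → ℝ) {π₁ π₂ : Set (X × ℝ)} (hd : Disjoint π₁ π₂) :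
    packVal g (π₁ ∪ π₂) = packVal g π₁ + packVal g π₂ := by
  rw [packVal, packVal, packVal]
  exact ENNReal.summable.tsum_union_disjoint (f := fun p : X × ℝ => ENNReal.ofReal (g p.2)) hd
    ENNReal.summable

lemma packPre_add_le_union (g : ℝ → ℝ) (Δ : Set ℝ) {δ : ℝ} {S T : Set X} {r : ℝ}
    (hr : 0 < r) (hδr : δ < r) (hST : ∀ x ∈ S, ∀ y ∈ T, r ≤ dist x y) :
    packPre g Δ δ S + packPre g Δ δ T ≤ packPre g Δ δ (S ∪ T) := by
  have hST' : Disjoint S T := by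
    rw [Set.disjoint_left]
    intro x hxS hxT
    have := hST x hxS x hxT
    rw [dist_self] at this
    linarith
  haveI h1 : Nonempty {π : Set (X × ℝ) // IsScaledPacking Δ δ π S} :=
    ⟨⟨∅, isScaledPacking_empty Δ δ S⟩⟩
  haveI h2 : Nonempty {π : Set (X × ℝ) // IsScaledPacking Δ δ π T} :=
    ⟨⟨∅, isScaledPacking_empty Δ δ T⟩⟩
  have e1 : packPre g Δ δ S = ⨆ π : {π : Set (X × ℝ) // IsScaledPacking Δ δ π S},
      packVal g π.1 := by
    rw [packPre, iSup_subtype']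
  have e2 : packPre g Δ δ T = ⨆ π : {π : Set (X × ℝ) // IsScaledPacking Δ δ π T},
      packVal g π.1 := by
    rw [packPre, iSup_subtype']
  rw [e1, e2]
  refine ENNReal.iSup_add_iSup_le fun π₁ π₂ => ?_
  have hd : Disjoint π₁.1 π₂.1 := by
    rw [Set.disjoint_left]
    intro p hp1 hp2
    exact Set.disjoint_left.mp hST' (π₁.2.1.2 p hp1) (π₂.2.1.2 p hp2)
  rw [← packVal_union g hd]
  exact le_iSup₂ (f := fun π (_ : IsScaledPacking Δ δ π (S ∪ T)) => packVal g π) _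
    (isScaledPacking_union π₁.2 π₂.2 hδr hST)

lemma packPre0_add_le_union (g : ℝ → ℝ) (Δ : Set ℝ) {S T : Set X} {r : ℝ}
    (hr : 0 < r) (hST : ∀ x ∈ S, ∀ y ∈ T, r ≤ dist x y) :
    packPre0 g Δ S + packPre0 g Δ T ≤ packPre0 g Δ (S ∪ T) := by
  refine le_iInf₂ fun δ hδ => ?_
  have hδ' : 0 < min δ (r/2) := lt_min hδ (by linarith)
  calc packPre0 g Δ S + packPre0 g Δ T
      ≤ packPre g Δ (min δ (r/2)) S + packPre g Δ (min δ (r/2)) T :=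
        add_le_add (iInf₂_le _ hδ') (iInf₂_le _ hδ')
    _ ≤ packPre g Δ (min δ (r/2)) (S ∪ T) :=
        packPre_add_le_union g Δ hr (lt_of_le_of_lt (min_le_right _ _) (by linarith)) hST
    _ ≤ packPre g Δ δ (S ∪ T) := packPre_mono_delta g Δ (min_le_left _ _) _

/-! ### The weighted packing premeasure -/

/-- Weighted packing premeasure: packings valued by `w(center) * h(radius)`. -/
noncomputable def thPre (w : X → ℝ≥0∞) (h : ℝ → ℝ) (Δ : Set ℝ) (δ : ℝ) (S : Set X) : ℝ≥0∞ :=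
  ⨆ (F : Finset (X × ℝ)) (_ : FinPack Δ δ F S), ∑ p ∈ F, w p.1 * ENNReal.ofReal (h p.2)

noncomputable def thPre0 (w : X → ℝ≥0∞) (h : ℝ → ℝ) (Δ : Set ℝ) (S : Set X) : ℝ≥0∞ :=
  ⨅ (δ : ℝ) (_ : 0 < δ), thPre w h Δ δ S

variable {w : X → ℝ≥0∞} {h : ℝ → ℝ} {Δ : Set ℝ}

lemma le_thPre_of_finPack {δ : ℝ} {F : Finset (X × ℝ)} {S : Set X} (hF : FinPack Δ δ F S) :
    (∑ p ∈ F, w p.1 * ENNReal.ofReal (h p.2)) ≤ thPre w h Δ δ S :=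
  le_iSup₂ (f := fun F (_ : FinPack Δ δ F S) => ∑ p ∈ F, w p.1 * ENNReal.ofReal (h p.2)) F hF

lemma thPre_mono_set {δ : ℝ} {S T : Set X} (hST : S ⊆ T) :
    thPre w h Δ δ S ≤ thPre w h Δ δ T :=
  iSup₂_le fun F hF => le_thPre_of_finPack (hF.mono_set hST)

lemma thPre_mono_delta {δ δ' : ℝ} (hδ : δ ≤ δ') (S : Set X) :
    thPre w h Δ δ S ≤ thPre w h Δ δ' S :=
  iSup₂_le fun F hF => le_thPre_of_finPack (hF.mono_delta hδ)

lemma thPre_empty {δ : ℝ} : thPre w h Δ δ (∅ : Set X) = 0 := by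
  refine le_antisymm (iSup₂_le fun F hF => ?_) (zero_le)
  have : F = ∅ := by
    ext p
    simp only [Finset.notMem_empty, iff_false]
    intro hp
    exact (hF.1 p hp).1
  subst this
  simp

lemma thPre0_empty : thPre0 w h Δ (∅ : Set X) = 0 := by
  refine le_antisymm ((iInf₂_le 1 one_pos).trans_eq thPre_empty) (zero_le)

lemma thPre0_mono_set {S T : Set X} (hST : S ⊆ T) : thPre0 w h Δ S ≤ thPre0 w h Δ T :=
  le_iInf₂ fun δ hδ => (iInf₂_le δ hδ).trans (thPre_mono_set hST)

lemma thPre_add_le_union {δ : ℝ} {S T : Set X} {r : ℝ}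
    (hr : 0 < r) (hδr : δ < r) (hST : ∀ x ∈ S, ∀ y ∈ T, r ≤ dist x y) :
    thPre w h Δ δ S + thPre w h Δ δ T ≤ thPre w h Δ δ (S ∪ T) := by
  classical
  haveI h1 : Nonempty {F : Finset (X × ℝ) // FinPack Δ δ F S} :=
    ⟨⟨∅, ⟨fun p hp => absurd hp (Finset.notMem_empty p),
      fun p hp => absurd hp (Finset.notMem_empty p)⟩⟩⟩
  haveI h2 : Nonempty {F : Finset (X × ℝ) // FinPack Δ δ F T} :=
    ⟨⟨∅, ⟨fun p hp => absurd hp (Finset.notMem_empty p),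
      fun p hp => absurd hp (Finset.notMem_empty p)⟩⟩⟩
  have e1 : thPre w h Δ δ S = ⨆ F : {F : Finset (X × ℝ) // FinPack Δ δ F S},
      ∑ p ∈ (F : Finset (X × ℝ)), w p.1 * ENNReal.ofReal (h p.2) := by
    rw [thPre, iSup_subtype']
  have e2 : thPre w h Δ δ T = ⨆ F : {F : Finset (X × ℝ) // FinPack Δ δ F T},
      ∑ p ∈ (F : Finset (X × ℝ)), w p.1 * ENNReal.ofReal (h p.2) := by
    rw [thPre, iSup_subtype']
  rw [e1, e2]
  refine ENNReal.iSup_add_iSup_le fun F₁ F₂ => ?_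
  have hdF : Disjoint (F₁ : Finset (X × ℝ)) (F₂ : Finset (X × ℝ)) := by
    rw [Finset.disjoint_left]
    intro p hp1 hp2
    have hx1 : p.1 ∈ S := (F₁.2.1 p hp1).1
    have hx2 : p.1 ∈ T := (F₂.2.1 p hp2).1
    have := hST p.1 hx1 p.1 hx2
    rw [dist_self] at this
    linarith
  rw [← Finset.sum_union hdF]
  refine le_thPre_of_finPack ?_
  constructor
  · intro p hp
    rcases Finset.mem_union.mp hp with hp|hp
    · exact ⟨Or.inl (F₁.2.1 p hp).1, (F₁.2.1 p hp).2⟩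
    · exact ⟨Or.inr (F₂.2.1 p hp).1, (F₂.2.1 p hp).2⟩
  · intro p hp q hq hpq
    rcases Finset.mem_union.mp hp with hp|hp <;> rcases Finset.mem_union.mp hq with hq|hq
    · exact F₁.2.2 p hp q hq hpq
    · calc p.2 ≤ δ := (F₁.2.1 p hp).2.2.2
        _ < r := hδr
        _ ≤ dist p.1 q.1 := hST p.1 (F₁.2.1 p hp).1 q.1 (F₂.2.1 q hq).1
    · calc p.2 ≤ δ := (F₂.2.1 p hp).2.2.2
        _ < r := hδr
        _ ≤ dist p.1 q.1 := by
            rw [dist_comm]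
            exact hST q.1 (F₁.2.1 q hq).1 p.1 (F₂.2.1 p hp).1
    · exact F₂.2.2 p hp q hq hpq

lemma thPre0_add_le_union {S T : Set X} {r : ℝ}
    (hr : 0 < r) (hST : ∀ x ∈ S, ∀ y ∈ T, r ≤ dist x y) :
    thPre0 w h Δ S + thPre0 w h Δ T ≤ thPre0 w h Δ (S ∪ T) := by
  refine le_iInf₂ fun δ hδ => ?_
  have hδ' : 0 < min δ (r/2) := lt_min hδ (by linarith)
  calc thPre0 w h Δ S + thPre0 w h Δ T
      ≤ thPre w h Δ (min δ (r/2)) S + thPre w h Δ (min δ (r/2)) T :=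
        add_le_add (iInf₂_le _ hδ') (iInf₂_le _ hδ')
    _ ≤ thPre w h Δ (min δ (r/2)) (S ∪ T) :=
        thPre_add_le_union hr (lt_of_le_of_lt (min_le_right _ _) (by linarith)) hST
    _ ≤ thPre w h Δ δ (S ∪ T) := thPre_mono_delta (min_le_left _ _) _


/-! ### Method I machinery -/

section MethodI

variable {τ : Set X → ℝ≥0∞}

lemma methodI_eq_ofFunction (h0 : τ ∅ = 0) (S : Set X) :
    methodI τ S = OuterMeasure.ofFunction τ h0 S :=
  (OuterMeasure.ofFunction_apply τ h0 S).symm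

lemma methodI_mono {S T : Set X} (hST : S ⊆ T) : methodI τ S ≤ methodI τ T :=
  le_iInf₂ fun A hA => iInf₂_le A (hST.trans hA)

lemma methodI_le_self (h0 : τ ∅ = 0) (S : Set X) : methodI τ S ≤ τ S := by
  refine (iInf₂_le (fun n => if n = 0 then S else ∅) ?_).trans ?_
  · intro x hx
    exact mem_iUnion.mpr ⟨0, by simpa using hx⟩
  · rw [tsum_eq_single 0]
    · simp
    · intro n hn
      simp [hn, h0]

lemma methodI_le_tsum_cover (A : ℕ → Set X) {S : Set X} (hA : S ⊆ ⋃ n, A n) :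
    methodI τ S ≤ ∑' n, τ (A n) :=
  iInf₂_le A hA

lemma isMetric_ofFunction (h0 : τ ∅ = 0)
    (hmono : ∀ ⦃S T : Set X⦄, S ⊆ T → τ S ≤ τ T)
    (hsep : ∀ S T : Set X, (∃ r : ℝ, 0 < r ∧ ∀ x ∈ S, ∀ y ∈ T, r ≤ dist x y) →
      τ S + τ T ≤ τ (S ∪ T)) :
    (OuterMeasure.ofFunction τ h0).IsMetric := by
  intro s t hst
  refine le_antisymm (measure_union_le (μ := OuterMeasure.ofFunction τ h0) s t) ?_
  obtain ⟨r, hr0, hrst⟩ := hst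
  set r' : ℝ := (min r 1).toReal with hr'def
  have hminne : min r 1 ≠ 0 := by
    refine (lt_min ?_ one_pos).ne'
    exact pos_iff_ne_zero.mpr hr0
  have hmintop : min r 1 ≠ ⊤ := ((min_le_right r 1).trans_lt ENNReal.one_lt_top).ne
  have hr'pos : 0 < r' := ENNReal.toReal_pos hminne hmintop
  have hrdist : ∀ x ∈ s, ∀ y ∈ t, r' ≤ dist x y := by
    intro x hx y hy
    have h1 : min r 1 ≤ edist x y := (min_le_left r 1).trans (hrst x hx y hy)
    have := ENNReal.toReal_mono (edist_ne_top x y) h1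
    rwa [← dist_edist] at this
  set U := {u : X | ∃ y ∈ s, dist u y < r'/3} with hUdef
  set V := {u : X | ∃ y ∈ t, dist u y < r'/3} with hVdef
  have hsU : s ⊆ U := fun x hx => ⟨x, hx, by simp only [dist_self]; linarith⟩
  have htV : t ⊆ V := fun x hx => ⟨x, hx, by simp only [dist_self]; linarith⟩
  have hUV : ∀ u ∈ U, ∀ v ∈ V, r'/3 ≤ dist u v := by
    rintro u ⟨ys, hys, hus⟩ v ⟨yt, hyt, hvt⟩
    have h1 : r' ≤ dist ys yt := hrdist ys hys yt hyt
    have t1 : dist ys yt ≤ dist ys u + dist u v + dist v yt := dist_triangle4 _ _ _ _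
    have c1 : dist ys u = dist u ys := dist_comm _ _
    linarith [hus, hvt]
  rw [OuterMeasure.ofFunction_apply]
  refine le_iInf₂ fun A hA => ?_
  have h1 : (OuterMeasure.ofFunction τ h0) s ≤ ∑' n, τ (A n ∩ U) := by
    rw [OuterMeasure.ofFunction_apply]
    refine iInf₂_le _ ?_
    intro x hx
    rcases mem_iUnion.mp (hA (Or.inl hx)) with ⟨n, hn⟩
    exact mem_iUnion.mpr ⟨n, hn, hsU hx⟩
  have h2 : (OuterMeasure.ofFunction τ h0) t ≤ ∑' n, τ (A n ∩ V) := by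
    rw [OuterMeasure.ofFunction_apply]
    refine iInf₂_le _ ?_
    intro x hx
    rcases mem_iUnion.mp (hA (Or.inr hx)) with ⟨n, hn⟩
    exact mem_iUnion.mpr ⟨n, hn, htV hx⟩
  calc (OuterMeasure.ofFunction τ h0) s + (OuterMeasure.ofFunction τ h0) t
      ≤ (∑' n, τ (A n ∩ U)) + ∑' n, τ (A n ∩ V) := add_le_add h1 h2
    _ = ∑' n, (τ (A n ∩ U) + τ (A n ∩ V)) := (ENNReal.tsum_add).symm
    _ ≤ ∑' n, τ (A n) := by
        refine ENNReal.tsum_le_tsum fun n => ?_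
        refine le_trans (hsep _ _ ⟨r'/3, by linarith, fun x hx y hy => hUV x hx.2 y hy.2⟩) ?_
        refine hmono ?_
        rintro x (⟨hx, _⟩|⟨hx, _⟩) <;> exact hx

lemma methodI_caratheodory_split [MeasurableSpace X] [BorelSpace X] (h0 : τ ∅ = 0)
    (hmono : ∀ ⦃S T : Set X⦄, S ⊆ T → τ S ≤ τ T)
    (hsep : ∀ S T : Set X, (∃ r : ℝ, 0 < r ∧ ∀ x ∈ S, ∀ y ∈ T, r ≤ dist x y) →
      τ S + τ T ≤ τ (S ∪ T))
    {B : Set X} (hB : MeasurableSet B) (T : Set X) :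
    methodI τ T = methodI τ (T ∩ B) + methodI τ (T \ B) := by
  have hm := isMetric_ofFunction h0 hmono hsep
  have hbc := hm.borel_le_caratheodory
  have hBc : MeasurableSet[(OuterMeasure.ofFunction τ h0).caratheodory] B := by
    apply hbc
    rw [← BorelSpace.measurable_eq (α := X)]
    exact hB
  have hsplit := (OuterMeasure.isCaratheodory_iff (OuterMeasure.ofFunction τ h0)).mp hBc T
  rw [methodI_eq_ofFunction h0, methodI_eq_ofFunction h0, methodI_eq_ofFunction h0]
  exact hsplit

lemma methodI_partition_le [MeasurableSpace X] [BorelSpace X] (h0 : τ ∅ = 0)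
    (hmono : ∀ ⦃S T : Set X⦄, S ⊆ T → τ S ≤ τ T)
    (hsep : ∀ S T : Set X, (∃ r : ℝ, 0 < r ∧ ∀ x ∈ S, ∀ y ∈ T, r ≤ dist x y) →
      τ S + τ T ≤ τ (S ∪ T))
    {ι : Type*} [DecidableEq ι] (K : Finset ι) (B : ι → Set X)
    (hB : ∀ i ∈ K, MeasurableSet (B i))
    (hd : ∀ i ∈ K, ∀ j ∈ K, i ≠ j → Disjoint (B i) (B j)) (S : Set X) :
    ∑ i ∈ K, methodI τ (S ∩ B i) ≤ methodI τ S := by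
  induction K using Finset.induction_on generalizing S with
  | empty => simp
  | @insert i K hiK ih =>
    rw [Finset.sum_insert hiK]
    have h1 : ∑ j ∈ K, methodI τ (S ∩ B j) ≤ ∑ j ∈ K, methodI τ ((S \ B i) ∩ B j) := by
      refine Finset.sum_le_sum fun j hj => methodI_mono ?_
      intro x hx
      refine ⟨⟨hx.1, fun hxi => ?_⟩, hx.2⟩
      exact Set.disjoint_left.mp (hd i (Finset.mem_insert_self i K) j
        (Finset.mem_insert_of_mem hj) (fun h => hiK (h ▸ hj))) hxi hx.2
    have h2 : ∑ j ∈ K, methodI τ ((S \ B i) ∩ B j) ≤ methodI τ (S \ B i) :=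
      ih (fun j hj => hB j (Finset.mem_insert_of_mem hj))
        (fun a ha b hb hab => hd a (Finset.mem_insert_of_mem ha) b
          (Finset.mem_insert_of_mem hb) hab) (S \ B i)
    calc methodI τ (S ∩ B i) + ∑ j ∈ K, methodI τ (S ∩ B j)
        ≤ methodI τ (S ∩ B i) + methodI τ (S \ B i) := add_le_add_right (h1.trans h2) _
      _ = methodI τ S := (methodI_caratheodory_split h0 hmono hsep
          (hB i (Finset.mem_insert_self i K)) S).symm

lemma exists_measurable_hull [MeasurableSpace X] [BorelSpace X] (h0 : τ ∅ = 0)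
    (hclosure : ∀ S : Set X, τ (closure S) = τ S) (S : Set X) :
    ∃ H : Set X, S ⊆ H ∧ MeasurableSet H ∧ methodI τ H = methodI τ S := by
  by_cases hfin : methodI τ S = ⊤
  · refine ⟨univ, subset_univ S, MeasurableSet.univ, ?_⟩
    rw [hfin]
    rw [eq_top_iff, ← hfin]
    exact methodI_mono (subset_univ S)
  have hcover : ∀ n : ℕ, ∃ A : ℕ → Set X, (S ⊆ ⋃ j, A j) ∧ (∀ j, IsClosed (A j)) ∧
      ∑' j, τ (A j) ≤ methodI τ S + ((n : ℝ≥0∞) + 1)⁻¹ := by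
    intro n
    have hlt : methodI τ S < methodI τ S + ((n : ℝ≥0∞) + 1)⁻¹ :=
      ENNReal.lt_add_right hfin (by simp)
    conv_lhs at hlt => rw [methodI]
    obtain ⟨A, hA⟩ := iInf_lt_iff.mp hlt
    obtain ⟨hAcov, hAlt⟩ := iInf_lt_iff.mp hA
    refine ⟨fun j => closure (A j), hAcov.trans (iUnion_mono fun j => subset_closure),
      fun j => isClosed_closure, ?_⟩
    calc ∑' j, τ (closure (A j)) = ∑' j, τ (A j) := by
          exact tsum_congr fun j => hclosure (A j)
      _ ≤ methodI τ S + ((n : ℝ≥0∞) + 1)⁻¹ := hAlt.le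
  choose A hA1 hA2 hA3 using hcover
  refine ⟨⋂ n, ⋃ j, A n j, subset_iInter fun n => hA1 n,
    MeasurableSet.iInter fun n => MeasurableSet.iUnion fun j => (hA2 n j).measurableSet, ?_⟩
  refine le_antisymm ?_ (methodI_mono (subset_iInter fun n => hA1 n))
  refine ENNReal.le_of_forall_pos_le_add fun ε hε _ => ?_
  obtain ⟨n, hn⟩ := ENNReal.exists_inv_nat_lt (show (ε : ℝ≥0∞) ≠ 0 by
    simpa using pos_iff_ne_zero.mp (by exact_mod_cast hε))
  have hle : ((n : ℝ≥0∞) + 1)⁻¹ ≤ (ε : ℝ≥0∞) := by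
    refine le_trans ?_ hn.le
    exact ENNReal.inv_le_inv.mpr (by simp)
  calc methodI τ (⋂ n, ⋃ j, A n j) ≤ ∑' j, τ (A n j) :=
        methodI_le_tsum_cover (A n) (iInter_subset _ n)
    _ ≤ methodI τ S + ((n : ℝ≥0∞) + 1)⁻¹ := hA3 n
    _ ≤ methodI τ S + ε := add_le_add_right hle _

lemma methodI_iUnion_monotone [MeasurableSpace X] [BorelSpace X] (h0 : τ ∅ = 0)
    (hmono : ∀ ⦃S T : Set X⦄, S ⊆ T → τ S ≤ τ T)
    (hsep : ∀ S T : Set X, (∃ r : ℝ, 0 < r ∧ ∀ x ∈ S, ∀ y ∈ T, r ≤ dist x y) →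
      τ S + τ T ≤ τ (S ∪ T))
    (hclosure : ∀ S : Set X, τ (closure S) = τ S)
    (S : ℕ → Set X) (hS : Monotone S) :
    methodI τ (⋃ n, S n) = ⨆ n, methodI τ (S n) := by
  refine le_antisymm ?_ (iSup_le fun n => methodI_mono (subset_iUnion S n))
  choose H hH1 hH2 hH3 using fun n => exists_measurable_hull h0 hclosure (S n)
  set K : ℕ → Set X := fun n => ⋂ m, ⋂ (_ : n ≤ m), H m with hKdef
  have hK1 : ∀ n, S n ⊆ K n := fun n =>
    subset_iInter fun m => subset_iInter fun hm => (hS hm).trans (hH1 m)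
  have hKmeas : ∀ n, MeasurableSet (K n) := fun n =>
    MeasurableSet.iInter fun m => MeasurableSet.iInter fun _ => hH2 m
  have hKmono : Monotone K := by
    intro a b hab x hx
    refine mem_iInter₂.mpr fun m hm => ?_
    exact mem_iInter₂.mp hx m (hab.trans hm)
  have hKval : ∀ n, methodI τ (K n) = methodI τ (S n) := by
    intro n
    refine le_antisymm ?_ (methodI_mono (hK1 n))
    refine le_trans (methodI_mono ?_) (hH3 n).le
    exact iInter₂_subset n le_rfl
  have hm := isMetric_ofFunction h0 hmono hsep
  have hbc : ‹MeasurableSpace X› ≤ (OuterMeasure.ofFunction τ h0).caratheodory := by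
    rw [BorelSpace.measurable_eq (α := X)]
    exact hm.borel_le_caratheodory
  set ν := (OuterMeasure.ofFunction τ h0).toMeasure hbc with hνdef
  have hνeq : ∀ {T : Set X}, MeasurableSet T → ν T = methodI τ T := by
    intro T hT
    rw [hνdef, MeasureTheory.toMeasure_apply _ _ hT, methodI_eq_ofFunction h0]
  calc methodI τ (⋃ n, S n) ≤ methodI τ (⋃ n, K n) :=
        methodI_mono (iUnion_mono fun n => hK1 n)
    _ = ν (⋃ n, K n) := (hνeq (MeasurableSet.iUnion hKmeas)).symm
    _ = ⨆ n, ν (K n) := (hKmono.directed_le).measure_iUnion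
    _ = ⨆ n, methodI τ (K n) := by
        exact iSup_congr fun n => hνeq (hKmeas n)
    _ = ⨆ n, methodI τ (S n) := iSup_congr fun n => hKval n

end MethodI


/-! ### Measurability of the fibered lower box premeasure -/

section Measurability

variable {E : Set (X × Y)}

/-- Points `x` whose section contains `k` points pairwise `≥ q` apart. -/
def ZSet (E : Set (X × Y)) (q : ℝ) (k : ℕ) : Set X :=
  {x | ∃ f : Fin k → Y, (∀ i, (x, f i) ∈ E) ∧ ∀ i j : Fin k, i ≠ j → q ≤ dist (f i) (f j)}

lemma isClosed_ZSet (hE : IsCompact E) (q : ℝ) (k : ℕ) : IsClosed (ZSet E q k) := by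
  refine IsSeqClosed.isClosed ?_
  intro u x hu hux
  choose f hf1 hf2 using hu
  set v : ℕ → (Fin k → X × Y) := fun m i => (u m, f m i) with hvdef
  have hv : ∀ m, v m ∈ Set.pi Set.univ (fun _ : Fin k => E) := by
    intro m
    rw [Set.mem_univ_pi]
    exact fun i => hf1 m i
  have hcomp : IsCompact (Set.pi Set.univ (fun _ : Fin k => E)) :=
    isCompact_univ_pi fun _ => hE
  obtain ⟨a, ha, φ, hφ, hconv⟩ := hcomp.tendsto_subseq hv
  rw [Set.mem_univ_pi] at ha
  have hcomp' : ∀ i : Fin k, Tendsto (fun m => v (φ m) i) atTop (𝓝 (a i)) :=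
    fun i => (tendsto_pi_nhds.mp hconv) i
  have hfst : ∀ i : Fin k, (a i).1 = x := by
    intro i
    have h1 : Tendsto (fun m => (v (φ m) i).1) atTop (𝓝 (a i).1) :=
      (continuous_fst.tendsto (a i)).comp (hcomp' i)
    have h2 : Tendsto (fun m => (v (φ m) i).1) atTop (𝓝 x) := by
      have : (fun m => (v (φ m) i).1) = fun m => u (φ m) := rfl
      rw [this]
      exact hux.comp (hφ.tendsto_atTop)
    exact tendsto_nhds_unique h1 h2
  refine ⟨fun i => (a i).2, ?_, ?_⟩
  · intro i
    have hxe : (x, (a i).2) = a i := Prod.ext (by rw [hfst i]) rfl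
    rw [hxe]
    exact ha i
  · intro i j hij
    have h1 : Tendsto (fun m => dist (f (φ m) i) (f (φ m) j)) atTop
        (𝓝 (dist (a i).2 (a j).2)) := by
      have hsi : Tendsto (fun m => (v (φ m) i).2) atTop (𝓝 (a i).2) :=
        (continuous_snd.tendsto (a i)).comp (hcomp' i)
      have hsj : Tendsto (fun m => (v (φ m) j).2) atTop (𝓝 (a j).2) :=
        (continuous_snd.tendsto (a j)).comp (hcomp' j)
      exact hsi.dist hsj
    exact ge_of_tendsto h1 (Filter.Eventually.of_forall fun m => hf2 (φ m) i j hij)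

lemma capacity_anti (S : Set Y) : Antitone (fun δ => capacity δ S) := by
  intro δ δ' hδδ'
  refine iSup₂_le fun F hF => ?_
  exact le_iSup₂ (f := fun F (_ : ↑F ⊆ S ∧ ∀ x ∈ F, ∀ y ∈ F, x ≠ y → δ < dist x y) =>
    (F.card : ℝ≥0∞)) F ⟨hF.1, fun a ha b hb hab => lt_of_le_of_lt hδδ' (hF.2 a ha b hb hab)⟩

lemma exists_finset_of_lt_capacity {S : Set Y} {δ : ℝ} {a : ℝ≥0∞} (h : a < capacity δ S) :
    ∃ F : Finset Y, (↑F ⊆ S ∧ ∀ x ∈ F, ∀ y ∈ F, x ≠ y → δ < dist x y) ∧ a < F.card := by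
  rw [capacity, lt_iSup_iff] at h
  obtain ⟨F, hF⟩ := h
  rw [lt_iSup_iff] at hF
  obtain ⟨hc, hlt⟩ := hF
  exact ⟨F, hc, hlt⟩

lemma le_capacity_of_finset {S : Set Y} {δ : ℝ} {F : Finset Y}
    (h1 : ↑F ⊆ S) (h2 : ∀ x ∈ F, ∀ y ∈ F, x ≠ y → δ < dist x y) :
    (F.card : ℝ≥0∞) ≤ capacity δ S :=
  le_iSup₂ (f := fun F (_ : ↑F ⊆ S ∧ ∀ x ∈ F, ∀ y ∈ F, x ≠ y → δ < dist x y) =>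
    (F.card : ℝ≥0∞)) F ⟨h1, h2⟩

lemma mem_ZSet_sect {x : X} {δ : ℝ} {k : ℕ} (hδ : 0 < δ)
    (hx : ∃ m : ℕ, x ∈ ZSet E (δ + (1 : ℝ)/(m+1)) k) :
    (k : ℝ≥0∞) ≤ capacity δ (sect E x) := by
  obtain ⟨m, f, hf1, hf2⟩ := hx
  classical
  have hinj : Function.Injective f := by
    intro i j hij
    by_contra hne
    have := hf2 i j hne
    rw [hij, dist_self] at this
    have : (0:ℝ) < δ + 1/(m+1) := by positivity
    linarith
  have hcard : (Finset.univ.image f).card = k := by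
    rw [Finset.card_image_of_injective _ hinj, Finset.card_univ, Fintype.card_fin]
  rw [← hcard]
  refine le_capacity_of_finset ?_ ?_
  · intro y hy
    simp only [Finset.coe_image, Set.mem_image] at hy
    obtain ⟨i, _, rfl⟩ := hy
    exact hf1 i
  · intro y hy z hz hyz
    rw [Finset.mem_image] at hy hz
    obtain ⟨i, _, rfl⟩ := hy
    obtain ⟨j, _, rfl⟩ := hz
    have hij : i ≠ j := fun h => hyz (by rw [h])
    calc δ < δ + 1/(m+1) := by
          have h01 : (0:ℝ) < 1/(m+1) := by positivity
          linarith
      _ ≤ dist (f i) (f j) := hf2 i j hij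

lemma sect_mem_ZSet {x : X} {δ : ℝ} {k : ℕ}
    (h : (k : ℝ≥0∞) ≤ capacity δ (sect E x)) (hk : 0 < k) :
    ∃ m : ℕ, x ∈ ZSet E (δ + (1 : ℝ)/(m+1)) k := by
  classical
  have hlt : ((k - 1 : ℕ) : ℝ≥0∞) < capacity δ (sect E x) :=
    lt_of_lt_of_le (by exact_mod_cast Nat.sub_lt hk one_pos) h
  obtain ⟨F, ⟨hFsub, hFsep⟩, hFcard⟩ := exists_finset_of_lt_capacity hlt
  have hkF : k ≤ F.card := by
    have : (k - 1 : ℕ) < F.card := by exact_mod_cast hFcard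
    omega
  obtain ⟨G, hGF, hGcard⟩ := Finset.exists_subset_card_eq hkF
  have hGsub : ↑G ⊆ sect E x := fun y hy => hFsub (hGF hy)
  have hGsep : ∀ a ∈ G, ∀ b ∈ G, a ≠ b → δ < dist a b :=
    fun a ha b hb hab => hFsep a (hGF ha) b (hGF hb) hab
  set P := G.offDiag with hPdef
  have hstep : ∃ m : ℕ, ∀ a ∈ G, ∀ b ∈ G, a ≠ b → δ + 1/(m+1) ≤ dist a b := by
    by_cases hP : P.Nonempty
    · have hinf : δ < P.inf' hP (fun ab => dist ab.1 ab.2) := by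
        rw [Finset.lt_inf'_iff]
        intro ab hab
        rw [hPdef, Finset.mem_offDiag] at hab
        exact hGsep ab.1 hab.1 ab.2 hab.2.1 hab.2.2
      obtain ⟨m, hm⟩ := exists_nat_one_div_lt (sub_pos.mpr hinf)
      refine ⟨m, fun a ha b hb hab => ?_⟩
      have hmem : (a, b) ∈ P := by
        rw [hPdef, Finset.mem_offDiag]
        exact ⟨ha, hb, hab⟩
      have := Finset.inf'_le (fun ab : Y × Y => dist ab.1 ab.2) hmem
      have hml : (1:ℝ)/(m+1) < P.inf' hP (fun ab => dist ab.1 ab.2) - δ := hm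
      linarith
    · refine ⟨0, fun a ha b hb hab => absurd ?_ hP⟩
      exact ⟨(a, b), by rw [hPdef, Finset.mem_offDiag]; exact ⟨ha, hb, hab⟩⟩
  obtain ⟨m, hm⟩ := hstep
  set e := G.equivFin with hedef
  refine ⟨m, fun i => ↑(e.symm (Fin.cast hGcard.symm i)), fun i => ?_, fun i j hij => ?_⟩
  · exact hGsub (e.symm (Fin.cast hGcard.symm i)).2
  · have hne : (e.symm (Fin.cast hGcard.symm i) : Y) ≠ ↑(e.symm (Fin.cast hGcard.symm j)) := by
      intro hcontra
      apply hij
      have h1 := Subtype.val_injective hcontra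
      have h2 := e.symm.injective h1
      exact Fin.cast_injective _ h2
    exact hm _ (e.symm (Fin.cast hGcard.symm i)).2 _ (e.symm (Fin.cast hGcard.symm j)).2 hne

lemma measurable_capacity_sect [MeasurableSpace X] [BorelSpace X] (hE : IsCompact E)
    {δ : ℝ} (hδ : 0 < δ) :
    Measurable fun x => capacity δ (sect E x) := by
  apply measurable_of_Ioi
  intro a
  have hset : (fun x => capacity δ (sect E x)) ⁻¹' Ioi a =
      ⋃ (k : ℕ), ⋃ (_ : a < (k : ℝ≥0∞) ∧ 0 < k), ⋃ (m : ℕ), ZSet E (δ + (1:ℝ)/(m+1)) k := by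
    ext x
    simp only [Set.mem_preimage, Set.mem_Ioi, Set.mem_iUnion]
    constructor
    · intro hx
      obtain ⟨F, ⟨hFsub, hFsep⟩, hFcard⟩ := exists_finset_of_lt_capacity hx
      have hk0 : 0 < F.card := by
        by_contra hc
        push_neg at hc
        interval_cases h : F.card
        · simp only [h, Nat.cast_zero] at hFcard
          exact absurd hFcard (by simp)
      obtain ⟨m, hm⟩ := sect_mem_ZSet (le_capacity_of_finset hFsub hFsep) hk0
      exact ⟨F.card, ⟨hFcard, hk0⟩, m, hm⟩
    · rintro ⟨k, ⟨hak, hk0⟩, m, hm⟩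
      exact lt_of_lt_of_le hak (mem_ZSet_sect hδ ⟨m, hm⟩)
  rw [hset]
  refine MeasurableSet.iUnion fun k => MeasurableSet.iUnion fun _ =>
    MeasurableSet.iUnion fun m => (isClosed_ZSet hE _ k).measurableSet

/-- Rewriting of `liminf` at `0⁺` as a countable sup of infima. -/
lemma liminf_nhdsGT (F : ℝ → ℝ≥0∞) :
    Filter.liminf F (𝓝[>] (0:ℝ)) = ⨆ n : ℕ, ⨅ δ ∈ Ioo (0:ℝ) (1/(n+1)), F δ := by
  rw [Filter.liminf_eq]
  apply le_antisymm
  · refine sSup_le fun a ha => ?_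
    simp only [Set.mem_setOf_eq] at ha
    rw [Filter.eventually_iff, mem_nhdsGT_iff_exists_Ioo_subset] at ha
    obtain ⟨u, hu, hsub⟩ := ha
    obtain ⟨n, hn⟩ := exists_nat_one_div_lt (Set.mem_Ioi.mp hu)
    refine le_trans ?_ (le_iSup _ n)
    exact le_iInf₂ fun δ hδ => hsub ⟨hδ.1, hδ.2.trans hn⟩
  · refine iSup_le fun n => le_sSup ?_
    have hmem : Ioo (0:ℝ) (1/(n+1)) ∈ 𝓝[>] (0:ℝ) :=
      Ioo_mem_nhdsGT_of_mem ⟨le_refl 0, by positivity⟩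
    exact Filter.eventually_of_mem hmem fun δ hδ => iInf₂_le δ hδ

/-- Reduction of the inner infimum to a countable index set. -/
lemma iInf_Ioo_countable_reduction (u : ℝ → ℝ≥0∞) (hu : Antitone u) {g : ℝ → ℝ}
    (hg : IsHausdorffFunction g) {G : ℝ → ℝ} (hGg : ∀ r, 0 < r → G r = g r)
    (hGmono : Monotone G) (R : Set ℝ)
    (hR : (Set.range ((↑) : ℚ → ℝ)) ∪ {r | ¬ContinuousAt G r} ⊆ R) (a : ℝ) :
    ⨅ δ ∈ Ioo (0:ℝ) a, u δ * ENNReal.ofReal (g δ)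
      = ⨅ δ ∈ R ∩ Ioo (0:ℝ) a, u δ * ENNReal.ofReal (g δ) := by
  apply le_antisymm
  · exact le_iInf₂ fun δ hδ => iInf₂_le δ hδ.2
  · refine le_iInf₂ fun δ hδ => ?_
    by_cases hδR : δ ∈ R
    · exact iInf₂_le δ ⟨hδR, hδ⟩
    have hcont : ContinuousAt G δ := by
      by_contra hc
      exact hδR (hR (Or.inr hc))
    by_cases htop : u δ * ENNReal.ofReal (g δ) = ⊤
    · rw [htop]
      exact le_top
    have hgδpos : 0 < g δ := hg.2 δ hδ.1
    have hufin : u δ ≠ ⊤ := by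
      intro hc
      apply htop
      rw [hc]
      rw [ENNReal.top_mul]
      simp [ENNReal.ofReal_pos.mpr hgδpos]
      positivity
    refine ENNReal.le_of_forall_pos_le_add fun ε hε _ => ?_
    -- choose a real margin η with `u δ * ofReal η ≤ ε`
    set c : ℝ≥0∞ := u δ with hcdef
    set η : ℝ≥0 := ε / (c.toNNReal + 1) with hηdef
    have hηpos : 0 < η := by
      rw [hηdef]
      positivity
    have hcη : c * (η : ℝ≥0∞) ≤ (ε : ℝ≥0∞) := by
      have hc1 : c ≤ ((c.toNNReal + 1 : ℝ≥0) : ℝ≥0∞) := by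
        rw [ENNReal.coe_add]
        refine le_trans (le_of_eq (ENNReal.coe_toNNReal hufin).symm) ?_
        exact le_add_of_nonneg_right (zero_le)
      calc c * (η : ℝ≥0∞) ≤ ((c.toNNReal + 1 : ℝ≥0) : ℝ≥0∞) * (η : ℝ≥0∞) :=
            mul_le_mul_left hc1 _
        _ = (((c.toNNReal + 1) * η : ℝ≥0) : ℝ≥0∞) := by rw [ENNReal.coe_mul]
        _ = (ε : ℝ≥0∞) := by
            rw [hηdef, mul_div_cancel₀]
            positivity
    -- use continuity of `G` at `δ`
    obtain ⟨θ, hθpos, hθ⟩ := Metric.continuousAt_iff.mp hcont (η : ℝ) (by exact_mod_cast hηpos)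
    obtain ⟨q, hq1, hq2⟩ := exists_rat_btwn (lt_min hδ.2 (lt_add_of_pos_right δ hθpos))
    have hqa : (q : ℝ) < a := lt_of_lt_of_le hq2 (min_le_left _ _)
    have hq0 : (0:ℝ) < q := hδ.1.trans hq1
    have hgq : g q ≤ g δ + η := by
      have hdist : dist (q : ℝ) δ < θ := by
        rw [Real.dist_eq, abs_lt]
        constructor <;> nlinarith [lt_of_lt_of_le hq2 (min_le_right _ _)]
      have := hθ hdist
      rw [Real.dist_eq, abs_lt] at this
      have e1 : G q = g q := hGg q hq0
      have e2 : G δ = g δ := hGg δ hδ.1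
      rw [e1, e2] at this
      linarith [this.2]
    have hmem : (q : ℝ) ∈ R ∩ Ioo (0:ℝ) a := ⟨hR (Or.inl ⟨q, rfl⟩), hq0, hqa⟩
    refine (iInf₂_le (q : ℝ) hmem).trans ?_
    calc u q * ENNReal.ofReal (g q) ≤ c * ENNReal.ofReal (g δ + (η : ℝ)) :=
          mul_le_mul' (hu hq1.le) (ENNReal.ofReal_le_ofReal hgq)
      _ ≤ c * (ENNReal.ofReal (g δ) + ENNReal.ofReal (η : ℝ)) :=
          mul_le_mul' le_rfl ENNReal.ofReal_add_le
      _ = c * ENNReal.ofReal (g δ) + c * ENNReal.ofReal (η : ℝ) := mul_add _ _ _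
      _ ≤ u δ * ENNReal.ofReal (g δ) + (ε : ℝ≥0∞) := by
          refine add_le_add le_rfl ?_
          rw [ENNReal.ofReal_coe_nnreal]
          exact hcη

lemma measurable_lboxPre0_sect [MeasurableSpace X] [BorelSpace X] (hE : IsCompact E)
    {g : ℝ → ℝ} (hg : IsHausdorffFunction g) :
    Measurable fun x => lboxPre0 g (sect E x) := by
  classical
  set G : ℝ → ℝ := fun r => if 0 < r then g r else 0 with hGdef
  have hGg : ∀ r, 0 < r → G r = g r := fun r hr => by simp [hGdef, hr]
  have hGmono : Monotone G := by
    intro r s hrs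
    by_cases hr : 0 < r
    · have hs : 0 < s := lt_of_lt_of_le hr hrs
      simp only [hGdef, if_pos hr, if_pos hs]
      exact hg.1 hr hs hrs
    · by_cases hs : 0 < s
      · simp only [hGdef, if_neg hr, if_pos hs]
        exact (hg.2 s hs).le
      · simp [hGdef, hr, hs]
  set R : Set ℝ := (Set.range ((↑) : ℚ → ℝ)) ∪ {r | ¬ContinuousAt G r} with hRdef
  have hRc : R.Countable := (Set.countable_range _).union hGmono.countable_not_continuousAt
  have hrw : (fun x => lboxPre0 g (sect E x)) = fun x =>
      ⨆ n : ℕ, ⨅ δ ∈ R ∩ Ioo (0:ℝ) (1/(n+1)),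
        capacity δ (sect E x) * ENNReal.ofReal (g δ) := by
    funext x
    rw [lboxPre0, liminf_nhdsGT]
    refine iSup_congr fun n => ?_
    exact iInf_Ioo_countable_reduction _ (capacity_anti (sect E x)) hg hGg hGmono R
      Set.Subset.rfl (1/(n+1))
  rw [hrw]
  refine Measurable.iSup fun n => ?_
  have hsub : (R ∩ Ioo (0:ℝ) (1/(n+1))).Countable := hRc.mono Set.inter_subset_left
  haveI := hsub.to_subtype
  have hform : (fun x => ⨅ δ ∈ R ∩ Ioo (0:ℝ) (1/(n+1)),
      capacity δ (sect E x) * ENNReal.ofReal (g δ)) = fun x =>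
      ⨅ δ : ↥(R ∩ Ioo (0:ℝ) (1/(n+1))),
        capacity (δ : ℝ) (sect E x) * ENNReal.ofReal (g (δ : ℝ)) := by
    funext x
    rw [iInf_subtype']
  rw [hform]
  exact Measurable.iInf fun δ =>
    (measurable_capacity_sect hE δ.2.2.1).mul_const _

end Measurability


/-! ### The key integral inequality -/

section Key

variable {g h : ℝ → ℝ} {Δ : Set ℝ} {E : Set (X × Y)}

lemma key_integral_le [MeasurableSpace X] [BorelSpace X]
    (hg : IsHausdorffFunction g) (hh : IsHausdorffFunction h)
    (s : SimpleFunc X ℝ≥0∞) (hs : ∀ x, s x ≤ lboxPre0 g (sect E x)) :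
    ∑ y ∈ s.range, y * packMeasure h Δ (⇑s ⁻¹' {y})
      ≤ packPre0 (fun r => g r * h r) Δ E := by
  classical
  set gh : ℝ → ℝ := fun r => g r * h r with hghdef
  set P := packPre0 gh Δ E with hPdef
  -- hypotheses bundle for the generic method I lemmas, for `packPre0 h Δ`
  have hpk0 : packPre0 h Δ (∅ : Set X) = 0 := packPre0_empty h Δ
  have hpkmono : ∀ ⦃S T : Set X⦄, S ⊆ T → packPre0 h Δ S ≤ packPre0 h Δ T :=
    fun S T hST => packPre0_mono_set h Δ hST
  have hpksep : ∀ S T : Set X, (∃ r : ℝ, 0 < r ∧ ∀ x ∈ S, ∀ y ∈ T, r ≤ dist x y) →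
      packPre0 h Δ S + packPre0 h Δ T ≤ packPre0 h Δ (S ∪ T) := by
    rintro S T ⟨r, hr, hST⟩
    exact packPre0_add_le_union h Δ hr hST
  have hpkcl : ∀ S : Set X, packPre0 h Δ (closure S) = packPre0 h Δ S :=
    fun S => packPre0_closure h Δ S
  -- main reduction over truncation `M` and parameter `t < 1`
  have main : ∀ (M : ℕ) (t : ℝ≥0∞), t < 1 →
      t * ∑ y ∈ s.range, (min y M) * packMeasure h Δ (⇑s ⁻¹' {y}) ≤ P := by
    intro M t ht
    set w : X → ℝ≥0∞ := fun x => t * min (s x) M with hwdef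
    have hwtop : ∀ x, w x ≠ ⊤ := by
      intro x
      refine ENNReal.mul_ne_top (ht.trans ENNReal.one_lt_top).ne ?_
      exact ne_top_of_le_ne_top (ENNReal.natCast_ne_top M) (min_le_right _ _)
    set G : ℕ → Set X := fun n => {x | ∀ ρ : ℝ, ρ ∈ Δ → 0 < ρ → ρ ≤ 1/((n:ℝ)+1) →
      w x ≤ capacity ρ (sect E x) * ENNReal.ofReal (g ρ)} with hGdef
    have hGmono : Monotone G := by
      intro m n hmn x hx ρ hρΔ hρ0 hρn
      refine hx ρ hρΔ hρ0 (hρn.trans ?_)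
      refine one_div_le_one_div_of_le (by positivity) ?_
      have : (m:ℝ) ≤ (n:ℝ) := Nat.cast_le.mpr hmn
      linarith
    have hGcov : ∀ x, ∃ n, x ∈ G n := by
      intro x
      by_cases hw0 : w x = 0
      · exact ⟨0, fun ρ _ _ _ => by simp [hw0]⟩
      have hmpos : min (s x) (M : ℝ≥0∞) ≠ 0 := by
        intro hc
        exact hw0 (by simp [hwdef, hc])
      have hmfin : min (s x) (M : ℝ≥0∞) ≠ ⊤ :=
        ne_top_of_le_ne_top (ENNReal.natCast_ne_top M) (min_le_right _ _)
      have hlt : w x < lboxPre0 g (sect E x) := by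
        calc w x = t * min (s x) M := rfl
          _ < 1 * min (s x) M := by
              rw [ENNReal.mul_lt_mul_iff_left hmpos hmfin]
              exact ht
          _ = min (s x) M := one_mul _
          _ ≤ s x := min_le_left _ _
          _ ≤ lboxPre0 g (sect E x) := hs x
      rw [lboxPre0, Filter.liminf_eq] at hlt
      obtain ⟨b, hb, hwb⟩ := lt_sSup_iff.mp hlt
      simp only [Set.mem_setOf_eq] at hb
      rw [Filter.eventually_iff, mem_nhdsGT_iff_exists_Ioo_subset] at hb
      obtain ⟨u, hu, hsub⟩ := hb
      obtain ⟨n, hn⟩ := exists_nat_one_div_lt (Set.mem_Ioi.mp hu)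
      refine ⟨n, fun ρ hρΔ hρ0 hρn => ?_⟩
      exact le_trans hwb.le (hsub ⟨hρ0, lt_of_le_of_lt hρn hn⟩)
    -- step A : lifting
    have hlift : ∀ (n : ℕ) (t₁ : ℝ≥0∞), t₁ < 1 → t₁ * thPre0 w h Δ (G n) ≤ P := by
      intro n t₁ ht₁
      refine le_iInf₂ fun δ' hδ' => ?_
      have hδmin : 0 < min δ' (1/((n:ℝ)+1)) := lt_min hδ' (by positivity)
      have h1 : thPre0 w h Δ (G n) ≤ thPre w h Δ (min δ' (1/((n:ℝ)+1))) (G n) :=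
        iInf₂_le _ hδmin
      refine le_trans (mul_le_mul' le_rfl h1) ?_
      rw [thPre, ENNReal.mul_iSup]
      refine iSup_le fun F => ?_
      rw [ENNReal.mul_iSup]
      refine iSup_le fun hF => ?_
      -- witness families in the fibers
      have hex : ∀ p : X × ℝ, ∃ Fy : Finset Y, p ∈ F →
          (↑Fy ⊆ sect E p.1 ∧ (∀ a ∈ Fy, ∀ b ∈ Fy, a ≠ b → p.2 < dist a b) ∧
           t₁ * w p.1 ≤ (Fy.card : ℝ≥0∞) * ENNReal.ofReal (g p.2)) := by
        intro p
        by_cases hp : p ∈ F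
        · have hcond := hF.1 p hp
          have hcap : w p.1 ≤ capacity p.2 (sect E p.1) * ENNReal.ofReal (g p.2) :=
            hcond.1 p.2 hcond.2.1 hcond.2.2.1 (le_trans hcond.2.2.2 (min_le_right _ _))
          by_cases hw0 : w p.1 = 0
          · refine ⟨∅, fun _ => ⟨by simp, by simp, by simp [hw0]⟩⟩
          · set gg := ENNReal.ofReal (g p.2) with hggdef
            have hggpos : gg ≠ 0 := by
              rw [hggdef]
              exact (ENNReal.ofReal_pos.mpr (hg.2 p.2 hcond.2.2.1)).ne'
            have hggtop : gg ≠ ⊤ := ENNReal.ofReal_ne_top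
            have hwfin : w p.1 ≠ ⊤ := hwtop p.1
            have hdivle : w p.1 / gg ≤ capacity p.2 (sect E p.1) :=
              (ENNReal.div_le_iff_le_mul (Or.inl hggpos) (Or.inl hggtop)).mpr hcap
            have hdiv0 : w p.1 / gg ≠ 0 := by
              simp only [ne_eq, ENNReal.div_eq_zero_iff, not_or]
              exact ⟨hw0, hggtop⟩
            have hdivtop : w p.1 / gg ≠ ⊤ :=
              (ENNReal.div_lt_top hwfin hggpos).ne
            have hlt2 : t₁ * (w p.1 / gg) < capacity p.2 (sect E p.1) := by
              calc t₁ * (w p.1 / gg) < 1 * (w p.1 / gg) := by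
                    rw [ENNReal.mul_lt_mul_iff_left hdiv0 hdivtop]
                    exact ht₁
                _ = w p.1 / gg := one_mul _
                _ ≤ _ := hdivle
            obtain ⟨Fy, hFy, hFycard⟩ := exists_finset_of_lt_capacity hlt2
            refine ⟨Fy, fun _ => ⟨hFy.1, hFy.2, ?_⟩⟩
            calc t₁ * w p.1 = (t₁ * (w p.1 / gg)) * gg := by
                  rw [mul_assoc, ENNReal.div_mul_cancel hggpos hggtop]
              _ ≤ (Fy.card : ℝ≥0∞) * gg := mul_le_mul_left hFycard.le _
        · exact ⟨∅, fun hc => absurd hc hp⟩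
      choose W hW using hex
      have hcdist : ∀ p ∈ F, ∀ q ∈ F, p ≠ q → p.1 ≠ q.1 := by
        intro p hp q hq hpq heq
        have h1 := hF.2 p hp q hq hpq
        rw [heq, dist_self] at h1
        exact absurd h1 (not_lt.mpr (hF.1 p hp).2.2.1.le)
      set Fhat : Finset ((X × Y) × ℝ) :=
        F.biUnion (fun p => (W p).image (fun y => ((p.1, y), p.2))) with hFhatdef
      have hmem_shape : ∀ e ∈ Fhat, ∃ p ∈ F, ∃ y ∈ W p, e = ((p.1, y), p.2) := by
        intro e he
        rw [hFhatdef, Finset.mem_biUnion] at he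
        obtain ⟨p, hp, he⟩ := he
        rw [Finset.mem_image] at he
        obtain ⟨y, hy, rfl⟩ := he
        exact ⟨p, hp, y, hy, rfl⟩
      have hFhatpack : FinPack Δ δ' Fhat E := by
        constructor
        · intro e he
          obtain ⟨p, hp, y, hy, rfl⟩ := hmem_shape e he
          have hspec := hW p hp
          refine ⟨hspec.1 hy, (hF.1 p hp).2.1, (hF.1 p hp).2.2.1, ?_⟩
          exact le_trans (hF.1 p hp).2.2.2 (min_le_left _ _)
        · intro e he e' he' hee
          obtain ⟨p, hp, y, hy, rfl⟩ := hmem_shape e he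
          obtain ⟨q, hq, z, hz, rfl⟩ := hmem_shape e' he'
          by_cases hpq : p = q
          · subst hpq
            have hyz : y ≠ z := by
              intro hc
              exact hee (by rw [hc])
            have hsep := (hW p hp).2.1 y hy z hz hyz
            calc p.2 < dist y z := hsep
              _ ≤ max (dist p.1 p.1) (dist y z) := le_max_right _ _
              _ = dist (p.1, y) (p.1, z) := by simp [Prod.dist_eq]
          · have h1 := hF.2 p hp q hq hpq
            calc p.2 < dist p.1 q.1 := h1
              _ ≤ max (dist p.1 q.1) (dist y z) := le_max_left _ _
              _ = dist (p.1, y) (q.1, z) := by simp [Prod.dist_eq]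
      have hdisjim : (↑F : Set (X × ℝ)).PairwiseDisjoint
          (fun p : X × ℝ => (W p).image (fun y => ((p.1, y), p.2))) := by
        intro p hp q hq hpq
        simp only [Function.onFun]
        rw [Finset.disjoint_left]
        intro e hep heq
        rw [Finset.mem_image] at hep heq
        obtain ⟨y, hy, rfl⟩ := hep
        obtain ⟨z, hz, hemk⟩ := heq
        have : q.1 = p.1 := congrArg (Prod.fst ∘ Prod.fst) hemk
        exact hcdist p hp q hq hpq this.symm
      have hsum : ∑ e ∈ Fhat, ENNReal.ofReal (gh e.2)
          = ∑ p ∈ F, ((W p).card : ℝ≥0∞) * ENNReal.ofReal (gh p.2) := by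
        rw [hFhatdef, Finset.sum_biUnion hdisjim]
        refine Finset.sum_congr rfl fun p hp => ?_
        rw [Finset.sum_image (fun a _ b _ hab => by
          have := congrArg (Prod.snd ∘ Prod.fst) hab
          exact this)]
        simp [Finset.sum_const, nsmul_eq_mul]
      calc t₁ * ∑ p ∈ F, w p.1 * ENNReal.ofReal (h p.2)
          = ∑ p ∈ F, (t₁ * w p.1) * ENNReal.ofReal (h p.2) := by
            rw [Finset.mul_sum]
            exact Finset.sum_congr rfl fun p _ => (mul_assoc _ _ _).symm
        _ ≤ ∑ p ∈ F, (((W p).card : ℝ≥0∞) * ENNReal.ofReal (g p.2)) * ENNReal.ofReal (h p.2) := by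
            refine Finset.sum_le_sum fun p hp => ?_
            exact mul_le_mul_left ((hW p hp).2.2) _
        _ = ∑ p ∈ F, ((W p).card : ℝ≥0∞) * ENNReal.ofReal (gh p.2) := by
            refine Finset.sum_congr rfl fun p hp => ?_
            rw [mul_assoc, ← ENNReal.ofReal_mul (hg.2 p.2 (hF.1 p hp).2.2.1).le]
        _ = ∑ e ∈ Fhat, ENNReal.ofReal (gh e.2) := hsum.symm
        _ ≤ packPre gh Δ δ' E := le_packPre_of_finPack gh hFhatpack
    -- step B : comparison on each fiber
    have hcomp : ∀ y : ℝ≥0∞, ∀ T : Set X, T ⊆ ⇑s ⁻¹' {y} →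
        (t * min y M) * packMeasure h Δ T ≤ methodI (thPre0 w h Δ) T := by
      intro y T hT
      set c : ℝ≥0∞ := t * min y M with hcdef
      have hconst : ∀ (U T' : Set X), T' ⊆ ⇑s ⁻¹' {y} → T' ⊆ U → ∀ δ : ℝ,
          c * packPre h Δ δ T' ≤ thPre w h Δ δ U := by
        intro U T' hT'y hT'U δ
        rw [packPre_eq_iSup_finPack, ENNReal.mul_iSup]
        refine iSup_le fun F => ?_
        rw [ENNReal.mul_iSup]
        refine iSup_le fun hF => ?_
        rw [Finset.mul_sum]
        have hcw : ∀ p ∈ F, c * ENNReal.ofReal (h p.2) = w p.1 * ENNReal.ofReal (h p.2) := by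
          intro p hp
          have hymem : p.1 ∈ ⇑s ⁻¹' {y} := hT'y (hF.1 p hp).1
          have hsy : s p.1 = y := hymem
          rw [hcdef, hwdef]
          simp only [hsy]
        rw [Finset.sum_congr rfl hcw]
        exact le_thPre_of_finPack (hF.mono_set hT'U)
      rw [packMeasure]
      refine le_iInf₂ fun A hA => ?_
      calc c * methodI (packPre0 h Δ) T
          ≤ c * ∑' n, packPre0 h Δ (A n ∩ ⇑s ⁻¹' {y}) := by
            refine mul_le_mul' le_rfl ?_
            refine methodI_le_tsum_cover _ ?_
            intro x hx
            rcases mem_iUnion.mp (hA hx) with ⟨n, hn⟩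
            exact mem_iUnion.mpr ⟨n, hn, hT hx⟩
        _ = ∑' n, c * packPre0 h Δ (A n ∩ ⇑s ⁻¹' {y}) := ENNReal.tsum_mul_left.symm
        _ ≤ ∑' n, thPre0 w h Δ (A n) := by
            refine ENNReal.tsum_le_tsum fun n => ?_
            refine le_iInf₂ fun δ hδ => ?_
            calc c * packPre0 h Δ (A n ∩ ⇑s ⁻¹' {y})
                ≤ c * packPre h Δ δ (A n ∩ ⇑s ⁻¹' {y}) :=
                  mul_le_mul' le_rfl (iInf₂_le δ hδ)
              _ ≤ thPre w h Δ δ (A n) :=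
                  hconst (A n) _ Set.inter_subset_right Set.inter_subset_left δ
    -- step C : partition and per-level bound
    have hstep : ∀ n : ℕ,
        ∑ y ∈ s.range, (t * min y M) * packMeasure h Δ (⇑s ⁻¹' {y} ∩ G n)
          ≤ thPre0 w h Δ (G n) := by
      intro n
      have hth0 : thPre0 w h Δ (∅ : Set X) = 0 := thPre0_empty
      have hthmono : ∀ ⦃S T : Set X⦄, S ⊆ T → thPre0 w h Δ S ≤ thPre0 w h Δ T :=
        fun S T hST => thPre0_mono_set hST
      have hthsep : ∀ S T : Set X, (∃ r : ℝ, 0 < r ∧ ∀ x ∈ S, ∀ y ∈ T, r ≤ dist x y) →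
          thPre0 w h Δ S + thPre0 w h Δ T ≤ thPre0 w h Δ (S ∪ T) := by
        rintro S T ⟨r, hr, hST⟩
        exact thPre0_add_le_union hr hST
      calc ∑ y ∈ s.range, (t * min y M) * packMeasure h Δ (⇑s ⁻¹' {y} ∩ G n)
          ≤ ∑ y ∈ s.range, methodI (thPre0 w h Δ) (G n ∩ ⇑s ⁻¹' {y}) := by
            refine Finset.sum_le_sum fun y hy => ?_
            rw [Set.inter_comm]
            exact hcomp y _ Set.inter_subset_right
        _ ≤ methodI (thPre0 w h Δ) (G n) :=
            methodI_partition_le hth0 hthmono hthsep s.range (fun y => ⇑s ⁻¹' {y})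
              (fun y _ => s.measurableSet_fiber y)
              (fun y _ z _ hyz => by
                rw [Set.disjoint_left]
                intro x hxy hxz
                exact hyz (hxy.symm.trans hxz))
              (G n)
        _ ≤ thPre0 w h Δ (G n) := methodI_le_self hth0 _
    -- continuity from below on each fiber
    have hcont : ∀ y : ℝ≥0∞, packMeasure h Δ (⇑s ⁻¹' {y})
        = ⨆ n, packMeasure h Δ (⇑s ⁻¹' {y} ∩ G n) := by
      intro y
      have hun : (⋃ n, ⇑s ⁻¹' {y} ∩ G n) = ⇑s ⁻¹' {y} := by
        refine Set.Subset.antisymm (iUnion_subset fun n => Set.inter_subset_left) ?_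
        intro x hx
        obtain ⟨n, hn⟩ := hGcov x
        exact mem_iUnion.mpr ⟨n, hx, hn⟩
      rw [packMeasure]
      have hmi := methodI_iUnion_monotone hpk0 hpkmono hpksep hpkcl
        (fun n => ⇑s ⁻¹' {y} ∩ G n)
        (fun a b hab => Set.inter_subset_inter le_rfl (hGmono hab))
      rw [hun] at hmi
      exact hmi
    -- assemble
    have hfinal : ∀ t₁ : ℝ≥0∞, t₁ < 1 →
        t₁ * ∑ y ∈ s.range, (t * min y M) * packMeasure h Δ (⇑s ⁻¹' {y}) ≤ P := by
      intro t₁ ht₁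
      have hrew : ∑ y ∈ s.range, (t * min y M) * packMeasure h Δ (⇑s ⁻¹' {y})
          = ⨆ n, ∑ y ∈ s.range, (t * min y M) * packMeasure h Δ (⇑s ⁻¹' {y} ∩ G n) := by
        calc ∑ y ∈ s.range, (t * min y M) * packMeasure h Δ (⇑s ⁻¹' {y})
            = ∑ y ∈ s.range, ⨆ n, (t * min y M) * packMeasure h Δ (⇑s ⁻¹' {y} ∩ G n) := by
              refine Finset.sum_congr rfl fun y _ => ?_
              rw [hcont y, ENNReal.mul_iSup]
          _ = ⨆ n, ∑ y ∈ s.range, (t * min y M) * packMeasure h Δ (⇑s ⁻¹' {y} ∩ G n) := by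
              refine ENNReal.finsetSum_iSup_of_monotone fun y => ?_
              intro a b hab
              exact mul_le_mul' le_rfl (methodI_mono
                (Set.inter_subset_inter le_rfl (hGmono hab)))
      rw [hrew, ENNReal.mul_iSup]
      refine iSup_le fun n => ?_
      exact le_trans (mul_le_mul' le_rfl (hstep n)) (hlift n t₁ ht₁)
    have hnot1 : ∑ y ∈ s.range, (t * min y M) * packMeasure h Δ (⇑s ⁻¹' {y}) ≤ P :=
      ENNReal.le_of_forall_lt_one_mul_le fun t₁ ht₁ => hfinal t₁ ht₁
    calc t * ∑ y ∈ s.range, (min y M) * packMeasure h Δ (⇑s ⁻¹' {y})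
        = ∑ y ∈ s.range, (t * min y M) * packMeasure h Δ (⇑s ⁻¹' {y}) := by
          rw [Finset.mul_sum]
          exact Finset.sum_congr rfl fun y _ => (mul_assoc _ _ _).symm
      _ ≤ P := hnot1
  -- remove `t`
  have hM : ∀ M : ℕ, ∑ y ∈ s.range, (min y M) * packMeasure h Δ (⇑s ⁻¹' {y}) ≤ P :=
    fun M => ENNReal.le_of_forall_lt_one_mul_le fun t ht => main M t ht
  -- remove the truncation
  have hsupmin : ∀ y : ℝ≥0∞, (⨆ M : ℕ, min y (M : ℝ≥0∞)) = y := by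
    intro y
    refine le_antisymm (iSup_le fun M => min_le_left _ _) ?_
    by_cases hy : y = ⊤
    · subst hy
      calc (⊤:ℝ≥0∞) = ⨆ M : ℕ, (M : ℝ≥0∞) := ENNReal.iSup_natCast.symm
        _ ≤ ⨆ M : ℕ, min ⊤ (M : ℝ≥0∞) := iSup_mono fun M => by simp
    · obtain ⟨M, hMy⟩ := ENNReal.exists_nat_gt hy
      refine le_trans (le_of_eq (min_eq_left hMy.le).symm)
        (le_iSup (fun M : ℕ => min y (M : ℝ≥0∞)) M)
  calc ∑ y ∈ s.range, y * packMeasure h Δ (⇑s ⁻¹' {y})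
      = ∑ y ∈ s.range, ⨆ M : ℕ, (min y M) * packMeasure h Δ (⇑s ⁻¹' {y}) := by
        refine Finset.sum_congr rfl fun y _ => ?_
        rw [← ENNReal.iSup_mul, hsupmin y]
    _ = ⨆ M : ℕ, ∑ y ∈ s.range, (min y M) * packMeasure h Δ (⇑s ⁻¹' {y}) := by
        refine ENNReal.finsetSum_iSup_of_monotone fun y => ?_
        intro a b hab
        exact mul_le_mul_left (min_le_min le_rfl (by exact_mod_cast Nat.cast_le.mpr hab)) _
    _ ≤ P := iSup_le hM

end Key

end Stmt7

end Stmt7Aux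

/-- Lemma `lem:cpt`. If `E ⊆ X × Y` is compact, then
`x ↦ lboxm^g_0(E_x)` is Borel measurable and
`pack^{gh}_{Δ,0}(E) ≥ ∫ lboxm^g_0(E_x) d pack^h_Δ(x)`. -/
theorem stmt7 {X Y : Type*} [MetricSpace X] [MetricSpace Y] (g h : ℝ → ℝ)
    (hg : IsHausdorffFunction g) (hh : IsHausdorffFunction h)
    (Δ : Set ℝ) (hΔ : IsScale Δ) (E : Set (X × Y)) (hE : IsCompact E) :
    (@Measurable X ℝ≥0∞ (borel X) _ (fun x => lboxPre0 g (sect E x))) ∧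
    packPre0 (fun r => g r * h r) Δ E ≥
      sLintegral (packMeasure h Δ) (fun x => lboxPre0 g (sect E x)) := by
  letI : MeasurableSpace X := borel X
  haveI : BorelSpace X := ⟨rfl⟩
  refine ⟨Stmt7.measurable_lboxPre0_sect hE hg, ?_⟩
  rw [ge_iff_le]
  unfold sLintegral
  exact iSup₂_le fun s hs => Stmt7.key_integral_le hg hh s hs
end

section
/- Let X, Y be metric spaces, g, h Hausdorff functions and Δ a scale. For any set E ⊆ X × Y, pack^{gh}_{Δ,0}(E) ≥ pack^h_Δ(X) · inf_{x∈X} lboxm^g_0(E_x). -/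
open Filter MeasureTheory Set
open scoped ENNReal NNReal Topology

open Filter MeasureTheory Set ZPaper
open scoped ENNReal NNReal Topology


namespace ZPaperAux
open ZPaper

variable {X : Type*} [MetricSpace X] {Y : Type*} [MetricSpace Y]
variable {g h : ℝ → ℝ} {Δ : Set ℝ} {δ δ' : ℝ} {A B S : Set X} {π : Set (X × ℝ)}

lemma isScaledPacking_empty : IsScaledPacking Δ δ (∅ : Set (X × ℝ)) A :=
  ⟨⟨⟨fun p hp => absurd hp (Set.notMem_empty p),
     fun p hp => absurd hp (Set.notMem_empty p)⟩,
    fun p hp => absurd hp (Set.notMem_empty p)⟩,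
   fun p hp => absurd hp (Set.notMem_empty p)⟩

lemma packVal_le_packPre (hπ : IsScaledPacking Δ δ π A) :
    packVal g π ≤ packPre g Δ δ A := by
  unfold packPre
  exact le_iSup₂ (f := fun (π : Set (X × ℝ)) (_ : IsScaledPacking Δ δ π A) => packVal g π) π hπ

lemma packPre_mono_set (hAB : A ⊆ B) : packPre g Δ δ A ≤ packPre g Δ δ B := by
  unfold packPre
  exact iSup₂_le fun π hπ =>
    packVal_le_packPre ⟨⟨hπ.1.1, fun p hp => hAB (hπ.1.2 p hp)⟩, hπ.2⟩

lemma packPre_mono_delta (hδ : δ ≤ δ') : packPre g Δ δ A ≤ packPre g Δ δ' A := by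
  conv_lhs => unfold packPre
  exact iSup₂_le fun π hπ =>
    packVal_le_packPre ⟨hπ.1, fun p hp => ⟨(hπ.2 p hp).1, (hπ.2 p hp).2.trans hδ⟩⟩

lemma packPre0_le (hδ : 0 < δ) : packPre0 g Δ A ≤ packPre g Δ δ A := by
  unfold packPre0
  exact iInf₂_le δ hδ

lemma packPre0_mono_set (hAB : A ⊆ B) : packPre0 g Δ A ≤ packPre0 g Δ B := by
  conv_rhs => unfold packPre0
  exact le_iInf₂ fun δ hδ => (packPre0_le hδ).trans (packPre_mono_set hAB)

lemma packVal_empty : packVal g (∅ : Set (X × ℝ)) = 0 := by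
  simp [packVal, tsum_empty]

lemma packPre_empty : packPre g Δ δ (∅ : Set X) = 0 := by
  unfold packPre
  refine le_antisymm (iSup₂_le fun π hπ => ?_) (zero_le)
  have hπe : π = ∅ :=
    Set.eq_empty_iff_forall_notMem.2 fun p hp => (hπ.1.2 p hp)
  rw [hπe, packVal_empty]

lemma packPre0_empty : packPre0 g Δ (∅ : Set X) = 0 :=
  le_antisymm ((packPre0_le one_pos).trans_eq packPre_empty) (zero_le)

lemma packPre_eq_iSup_subtype :
    packPre g Δ δ A = ⨆ π : {π : Set (X × ℝ) // IsScaledPacking Δ δ π A}, packVal g π.1 := by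
  unfold packPre
  exact iSup_subtype'

lemma packPre_add_le {ρ : ℝ} (hδρ : δ < ρ)
    (hsep : ∀ x ∈ A, ∀ y ∈ B, ρ ≤ dist x y) :
    packPre g Δ δ A + packPre g Δ δ B ≤ packPre g Δ δ (A ∪ B) := by
  rw [packPre_eq_iSup_subtype (A := A), packPre_eq_iSup_subtype (A := B)]
  haveI : Nonempty {π : Set (X × ℝ) // IsScaledPacking Δ δ π A} :=
    ⟨⟨∅, isScaledPacking_empty⟩⟩
  haveI : Nonempty {π : Set (X × ℝ) // IsScaledPacking Δ δ π B} :=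
    ⟨⟨∅, isScaledPacking_empty⟩⟩
  refine ENNReal.iSup_add_iSup_le fun πA πB => ?_
  obtain ⟨πA, hA⟩ := πA
  obtain ⟨πB, hB⟩ := πB
  have hd : Disjoint πA πB := by
    rw [Set.disjoint_left]
    intro p hpA hpB
    have h1 : ρ ≤ dist p.1 p.1 := hsep p.1 (hA.1.2 p hpA) p.1 (hB.1.2 p hpB)
    rw [dist_self] at h1
    have h2 : 0 < p.2 := hA.1.1.1 p hpA
    have h3 : p.2 ≤ δ := (hA.2 p hpA).2
    linarith
  have hu : IsScaledPacking Δ δ (πA ∪ πB) (A ∪ B) := by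
    refine ⟨⟨⟨?_, ?_⟩, ?_⟩, ?_⟩
    · rintro p (hp | hp)
      exacts [hA.1.1.1 p hp, hB.1.1.1 p hp]
    · rintro p (hp | hp) q (hq | hq) hne
      · exact hA.1.1.2 p hp q hq hne
      · calc p.2 ≤ δ := (hA.2 p hp).2
          _ < ρ := hδρ
          _ ≤ dist p.1 q.1 := hsep p.1 (hA.1.2 p hp) q.1 (hB.1.2 q hq)
      · calc p.2 ≤ δ := (hB.2 p hp).2
          _ < ρ := hδρ
          _ ≤ dist p.1 q.1 := by
            rw [dist_comm]
            exact hsep q.1 (hA.1.2 q hq) p.1 (hB.1.2 p hp)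
      · exact hB.1.1.2 p hp q hq hne
    · rintro p (hp | hp)
      exacts [Or.inl (hA.1.2 p hp), Or.inr (hB.1.2 p hp)]
    · rintro p (hp | hp)
      exacts [hA.2 p hp, hB.2 p hp]
  have hval : packVal g (πA ∪ πB) = packVal g πA + packVal g πB :=
    ENNReal.summable.tsum_union_disjoint (f := fun p : X × ℝ => ENNReal.ofReal (g p.2)) hd
      ENNReal.summable
  exact le_trans (le_of_eq hval.symm) (packVal_le_packPre hu)

lemma packPre0_add_le {ρ : ℝ} (hρ : 0 < ρ)
    (hsep : ∀ x ∈ A, ∀ y ∈ B, ρ ≤ dist x y) :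
    packPre0 g Δ A + packPre0 g Δ B ≤ packPre0 g Δ (A ∪ B) := by
  conv_rhs => unfold packPre0
  refine le_iInf₂ fun δ hδ => ?_
  have hδ' : 0 < min δ (ρ / 2) := lt_min hδ (by linarith)
  calc packPre0 g Δ A + packPre0 g Δ B
      ≤ packPre g Δ (min δ (ρ / 2)) A + packPre g Δ (min δ (ρ / 2)) B :=
        add_le_add (packPre0_le hδ') (packPre0_le hδ')
    _ ≤ packPre g Δ (min δ (ρ / 2)) (A ∪ B) :=
        packPre_add_le (lt_of_le_of_lt (min_le_right _ _) (by linarith)) hsep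
    _ ≤ packPre g Δ δ (A ∪ B) := packPre_mono_delta (min_le_left _ _)

lemma finset_packVal_le (s : Finset (X × ℝ))
    (hpos : ∀ p ∈ s, 0 < p.2)
    (hsepn : ∀ p ∈ s, ∀ q ∈ s, p ≠ q → p.2 < dist p.1 q.1)
    (hcl : ∀ p ∈ s, p.1 ∈ closure A)
    (hrad : ∀ p ∈ s, p.2 ∈ Δ ∧ p.2 ≤ δ) :
    ∑ p ∈ s, ENNReal.ofReal (g p.2) ≤ packPre g Δ δ A := by
  classical
  set T : Finset ℝ :=
    ((s ×ˢ s).filter (fun pq => pq.1 ≠ pq.2)).image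
      (fun pq => dist pq.1.1 pq.2.1 - pq.1.2) with hT
  have hT'ne : (insert (1 : ℝ) T).Nonempty := Finset.insert_nonempty _ _
  set η : ℝ := (insert (1 : ℝ) T).min' hT'ne / 3 with hη
  have hmem_pos : ∀ x ∈ insert (1 : ℝ) T, 0 < x := by
    intro x hx
    rcases Finset.mem_insert.1 hx with hx1 | hxT
    · rw [hx1]; norm_num
    · obtain ⟨pq, hpq, rfl⟩ := Finset.mem_image.1 hxT
      obtain ⟨hpqs, hne⟩ := Finset.mem_filter.1 hpq
      obtain ⟨hp, hq⟩ := Finset.mem_product.1 hpqs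
      have := hsepn pq.1 hp pq.2 hq hne
      linarith
  have hηpos : 0 < η := by
    have := hmem_pos _ (Finset.min'_mem _ hT'ne)
    rw [hη]; linarith
  have hη3 : ∀ p ∈ s, ∀ q ∈ s, p ≠ q → p.2 + 3 * η ≤ dist p.1 q.1 := by
    intro p hp q hq hne
    have hmemT : dist p.1 q.1 - p.2 ∈ insert (1 : ℝ) T := by
      refine Finset.mem_insert_of_mem (Finset.mem_image.2 ⟨(p, q), ?_, rfl⟩)
      exact Finset.mem_filter.2 ⟨Finset.mem_product.2 ⟨hp, hq⟩, hne⟩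
    have := Finset.min'_le _ _ hmemT
    rw [hη]; linarith
  have hch : ∀ p : X × ℝ, ∃ x : X, p ∈ s → x ∈ A ∧ dist x p.1 < η := by
    intro p
    by_cases hp : p ∈ s
    · obtain ⟨b, hbA, hbd⟩ := Metric.mem_closure_iff.1 (hcl p hp) η hηpos
      exact ⟨b, fun _ => ⟨hbA, by rwa [dist_comm]⟩⟩
    · exact ⟨p.1, fun hmem => absurd hmem hp⟩
  choose f hf using hch
  have key : ∀ p ∈ s, ∀ q ∈ s, p ≠ q → p.2 < dist (f p) (f q) := by
    intro p hp q hq hne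
    have h3 := hη3 p hp q hq hne
    have h1 := (hf p hp).2
    have h2 := (hf q hq).2
    have h4 : dist p.1 q.1 ≤ dist p.1 (f p) + dist (f p) (f q) + dist (f q) q.1 :=
      dist_triangle4 _ _ _ _
    have h5 : dist p.1 (f p) = dist (f p) p.1 := dist_comm _ _
    have h6 : dist (f q) q.1 < η := h2
    linarith
  have hinj : ∀ p ∈ s, ∀ q ∈ s,
      (fun p : X × ℝ => (f p, p.2)) p = (fun p : X × ℝ => (f p, p.2)) q → p = q := by
    intro p hp q hq heq
    by_contra hne
    have hk := key p hp q hq hne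
    have hfe : f p = f q := congrArg Prod.fst heq
    rw [hfe, dist_self] at hk
    exact absurd hk (not_lt.2 (le_of_lt (hpos p hp)))
  set π₁ : Finset (X × ℝ) := s.image (fun p => (f p, p.2)) with hπ₁
  have hmem : ∀ q ∈ π₁, ∃ p ∈ s, (f p, p.2) = q := by
    intro q hq
    obtain ⟨p, hp, hpe⟩ := Finset.mem_image.1 hq
    exact ⟨p, hp, hpe⟩
  have hpack : IsScaledPacking Δ δ (↑π₁ : Set (X × ℝ)) A := by
    refine ⟨⟨⟨?_, ?_⟩, ?_⟩, ?_⟩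
    · intro q hq
      obtain ⟨p, hp, rfl⟩ := hmem q hq
      exact hpos p hp
    · intro q hq q' hq' hne
      obtain ⟨p, hp, rfl⟩ := hmem q hq
      obtain ⟨p', hp', rfl⟩ := hmem q' hq'
      have hpp' : p ≠ p' := fun hpe => hne (by rw [hpe])
      exact key p hp p' hp' hpp'
    · intro q hq
      obtain ⟨p, hp, rfl⟩ := hmem q hq
      exact (hf p hp).1
    · intro q hq
      obtain ⟨p, hp, rfl⟩ := hmem q hq
      exact hrad p hp
  have hval : packVal g (↑π₁ : Set (X × ℝ)) = ∑ p ∈ s, ENNReal.ofReal (g p.2) := by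
    unfold packVal
    rw [Finset.tsum_subtype' π₁ (fun p => ENNReal.ofReal (g p.2)), hπ₁,
      Finset.sum_image hinj]
  exact le_trans (le_of_eq hval.symm) (packVal_le_packPre hpack)

lemma packPre_closure_le : packPre g Δ δ (closure A) ≤ packPre g Δ δ A := by
  classical
  conv_lhs => unfold packPre
  refine iSup₂_le fun π hπ => ?_
  unfold packVal
  rw [ENNReal.tsum_eq_iSup_sum]
  refine iSup_le fun t => ?_
  have hs : ∑ p ∈ t, ENNReal.ofReal (g p.1.2)
      = ∑ p ∈ t.image Subtype.val, ENNReal.ofReal (g p.2) := by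
    rw [Finset.sum_image (fun p _ q _ hpq => Subtype.ext hpq)]
  rw [hs]
  refine finset_packVal_le _ ?_ ?_ ?_ ?_
  · intro p hp
    obtain ⟨q, _, rfl⟩ := Finset.mem_image.1 hp
    exact hπ.1.1.1 q.1 q.2
  · intro p hp q hq hne
    obtain ⟨p', _, rfl⟩ := Finset.mem_image.1 hp
    obtain ⟨q', _, rfl⟩ := Finset.mem_image.1 hq
    exact hπ.1.1.2 p'.1 p'.2 q'.1 q'.2 hne
  · intro p hp
    obtain ⟨q, _, rfl⟩ := Finset.mem_image.1 hp
    exact hπ.1.2 q.1 q.2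
  · intro p hp
    obtain ⟨q, _, rfl⟩ := Finset.mem_image.1 hp
    exact hπ.2 q.1 q.2

lemma packPre0_closure_le : packPre0 g Δ (closure A) ≤ packPre0 g Δ A := by
  conv_rhs => unfold packPre0
  exact le_iInf₂ fun δ hδ => (packPre0_le hδ).trans packPre_closure_le

/-- The packing measure as a mathlib outer measure. -/
noncomputable def pm (g : ℝ → ℝ) (Δ : Set ℝ) : MeasureTheory.OuterMeasure X :=
  MeasureTheory.OuterMeasure.ofFunction (packPre0 g Δ) packPre0_empty

lemma pm_eq (A : Set X) : packMeasure g Δ A = pm g Δ A := by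
  unfold packMeasure methodI pm
  rw [MeasureTheory.OuterMeasure.ofFunction_apply]

lemma pm_le_cover {C : ℕ → Set X} (hC : A ⊆ ⋃ n, C n) :
    (pm g Δ : MeasureTheory.OuterMeasure X) A ≤ ∑' n, packPre0 g Δ (C n) := by
  unfold pm
  rw [MeasureTheory.OuterMeasure.ofFunction_apply]
  exact iInf₂_le C hC

lemma pm_isMetric : (pm g Δ : MeasureTheory.OuterMeasure X).IsMetric := by
  intro sA sB hsep
  refine le_antisymm (measure_union_le _ _) ?_
  obtain ⟨r, hr0, hr⟩ := hsep
  set ρ : ℝ := (min r 1).toReal with hρdef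
  have hmin_ne_top : min r 1 ≠ ⊤ := ne_top_of_le_ne_top (by simp) (min_le_right _ _)
  have hmin_ne_zero : min r 1 ≠ 0 := by
    simp only [ne_eq, min_eq_iff]
    rintro (⟨h1, -⟩ | ⟨h1, -⟩)
    · exact hr0 h1
    · exact one_ne_zero h1
  have hρpos : 0 < ρ := ENNReal.toReal_pos hmin_ne_zero hmin_ne_top
  have hsep' : ∀ x ∈ sA, ∀ y ∈ sB, ρ ≤ dist x y := by
    intro x hx y hy
    have h1 : min r 1 ≤ edist x y := le_trans (min_le_left _ _) (hr x hx y hy)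
    rw [edist_dist] at h1
    have h2 := ENNReal.toReal_mono ENNReal.ofReal_ne_top h1
    rwa [ENNReal.toReal_ofReal dist_nonneg] at h2
  conv_rhs => rw [show (pm g Δ : MeasureTheory.OuterMeasure X) (sA ∪ sB)
    = ⨅ (C : ℕ → Set X) (_ : sA ∪ sB ⊆ ⋃ n, C n), ∑' n, packPre0 g Δ (C n)
    from MeasureTheory.OuterMeasure.ofFunction_apply _ _ _]
  refine le_iInf₂ fun C hC => ?_
  have hCA : sA ⊆ ⋃ n, C n ∩ sA := by
    intro x hx
    obtain ⟨t, ⟨n, rfl⟩, hxt⟩ := hC (Set.mem_union_left _ hx)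
    exact Set.mem_iUnion.2 ⟨n, hxt, hx⟩
  have hCB : sB ⊆ ⋃ n, C n ∩ sB := by
    intro x hx
    obtain ⟨t, ⟨n, rfl⟩, hxt⟩ := hC (Set.mem_union_right _ hx)
    exact Set.mem_iUnion.2 ⟨n, hxt, hx⟩
  calc (pm g Δ : MeasureTheory.OuterMeasure X) sA + (pm g Δ : MeasureTheory.OuterMeasure X) sB
      ≤ (∑' n, packPre0 g Δ (C n ∩ sA)) + ∑' n, packPre0 g Δ (C n ∩ sB) :=
        add_le_add (pm_le_cover hCA) (pm_le_cover hCB)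
    _ = ∑' n, (packPre0 g Δ (C n ∩ sA) + packPre0 g Δ (C n ∩ sB)) :=
        ENNReal.tsum_add.symm
    _ ≤ ∑' n, packPre0 g Δ (C n) := by
        refine ENNReal.tsum_le_tsum fun n => ?_
        refine le_trans (packPre0_add_le hρpos ?_) (packPre0_mono_set ?_)
        · exact fun x hx y hy => hsep' x hx.2 y hy.2
        · rintro x (hx | hx)
          exacts [hx.1, hx.1]

/-- The key lifting lemma: a fine packing of a "uniformly capacious" set lifts
to a packing of `E` in the product. -/
lemma lift_le {E : Set (X × Y)} (hg : IsHausdorffFunction g)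
    (c : ℝ≥0) (hδ'δ : δ' ≤ δ)
    (hS : ∀ x ∈ S, ∀ r : ℝ, 0 < r → r ≤ δ' →
      (c : ℝ≥0∞) < capacity r (sect E x) * ENNReal.ofReal (g r)) :
    (c : ℝ≥0∞) * packPre h Δ δ' S ≤ packPre (fun r => g r * h r) Δ δ E := by
  classical
  conv_lhs => unfold packPre
  rw [ENNReal.mul_iSup]
  refine iSup_le fun π => ?_
  rw [ENNReal.mul_iSup]
  refine iSup_le fun hπ => ?_
  have hch : ∀ p : π, ∃ F : Finset Y, (↑F ⊆ sect E p.1.1) ∧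
      (∀ y ∈ F, ∀ z ∈ F, y ≠ z → p.1.2 < dist y z) ∧
      (c : ℝ≥0∞) ≤ F.card * ENNReal.ofReal (g p.1.2) := by
    intro p
    have hpos : 0 < p.1.2 := hπ.1.1.1 p.1 p.2
    have hrad := hπ.2 p.1 p.2
    have hcap := hS p.1.1 (hπ.1.2 p.1 p.2) p.1.2 hpos hrad.2
    have ha0 : ENNReal.ofReal (g p.1.2) ≠ 0 :=
      ne_of_gt (ENNReal.ofReal_pos.2 (hg.2 _ hpos))
    have hat : ENNReal.ofReal (g p.1.2) ≠ ⊤ := ENNReal.ofReal_ne_top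
    have hdiv : (c : ℝ≥0∞) / ENNReal.ofReal (g p.1.2)
        < capacity p.1.2 (sect E p.1.1) :=
      (ENNReal.div_lt_iff (Or.inl ha0) (Or.inl hat)).2 hcap
    unfold capacity at hdiv
    rw [lt_iSup_iff] at hdiv
    obtain ⟨F, hF⟩ := hdiv
    rw [lt_iSup_iff] at hF
    obtain ⟨hFprop, hcard⟩ := hF
    exact ⟨F, hFprop.1, hFprop.2,
      le_of_lt ((ENNReal.div_lt_iff (Or.inl ha0) (Or.inl hat)).1 hcard)⟩
  choose Fp hF1 hF2 hF3 using hch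
  let e : (Σ p : π, {y : Y // y ∈ Fp p}) → (X × Y) × ℝ :=
    fun i => ((i.1.1.1, i.2.1), i.1.1.2)
  have hinj : Function.Injective e := by
    rintro ⟨p, y⟩ ⟨q, z⟩ heq
    simp only [e, Prod.mk.injEq] at heq
    obtain ⟨⟨h1, h2⟩, h3⟩ := heq
    have hpq : p = q := Subtype.ext (Prod.ext h1 h3)
    subst hpq
    exact congrArg _ (Subtype.ext h2)
  have hπ' : IsScaledPacking Δ δ (Set.range e) E := by
    refine ⟨⟨⟨?_, ?_⟩, ?_⟩, ?_⟩
    · rintro q ⟨i, rfl⟩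
      exact hπ.1.1.1 i.1.1 i.1.2
    · rintro q ⟨⟨p, y⟩, rfl⟩ q' ⟨⟨p', y'⟩, rfl⟩ hne
      rw [Prod.dist_eq]
      by_cases hpp' : p = p'
      · subst hpp'
        have hyy' : (y : Y) ≠ (y' : Y) := by
          intro hY
          exact hne (by simp only [e, hY])
        calc (e ⟨p, y⟩).2 < dist (y : Y) (y' : Y) :=
              hF2 p _ y.2 _ y'.2 hyy'
          _ ≤ max (dist (e ⟨p, y⟩).1.1 (e ⟨p, y'⟩).1.1) (dist (y : Y) (y' : Y)) :=
              le_max_right _ _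
      · have hne' : (p : X × ℝ) ≠ (p' : X × ℝ) := fun hc => hpp' (Subtype.ext hc)
        have hd := hπ.1.1.2 p.1 p.2 p'.1 p'.2 hne'
        calc (e ⟨p, y⟩).2 < dist p.1.1 p'.1.1 := hd
          _ ≤ max (dist p.1.1 p'.1.1) _ := le_max_left _ _
    · rintro q ⟨⟨p, y⟩, rfl⟩
      exact hF1 p y.2
    · rintro q ⟨⟨p, y⟩, rfl⟩
      exact ⟨(hπ.2 p.1 p.2).1, (hπ.2 p.1 p.2).2.trans hδ'δ⟩
  have hval : packVal (fun r => g r * h r) (Set.range e)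
      = ∑' p : π, (Fp p).card * ENNReal.ofReal (g p.1.2 * h p.1.2) := by
    unfold packVal
    rw [← (Equiv.ofInjective e hinj).tsum_eq
        (fun q : Set.range e => ENNReal.ofReal
          (g (q : (X × Y) × ℝ).2 * h (q : (X × Y) × ℝ).2))]
    rw [ENNReal.tsum_sigma']
    refine tsum_congr fun p => ?_
    have : ∀ y : {y : Y // y ∈ Fp p},
        ENNReal.ofReal (g (e ⟨p, y⟩).2 * h (e ⟨p, y⟩).2)
          = ENNReal.ofReal (g p.1.2 * h p.1.2) := fun y => rfl
    rw [tsum_congr fun y => by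
      rw [Equiv.ofInjective_apply]]
    rw [Finset.tsum_subtype (Fp p) (fun _ => ENNReal.ofReal (g p.1.2 * h p.1.2)),
      Finset.sum_const, nsmul_eq_mul]
  calc (c : ℝ≥0∞) * packVal h π
      = ∑' p : π, (c : ℝ≥0∞) * ENNReal.ofReal (h p.1.2) := by
        unfold packVal
        rw [ENNReal.tsum_mul_left]
    _ ≤ ∑' p : π, (Fp p).card * ENNReal.ofReal (g p.1.2 * h p.1.2) := by
        refine ENNReal.tsum_le_tsum fun p => ?_
        have hpos : 0 < p.1.2 := hπ.1.1.1 p.1 p.2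
        calc (c : ℝ≥0∞) * ENNReal.ofReal (h p.1.2)
            ≤ ((Fp p).card * ENNReal.ofReal (g p.1.2)) * ENNReal.ofReal (h p.1.2) :=
              mul_le_mul_left (hF3 p) _
          _ = (Fp p).card * ENNReal.ofReal (g p.1.2 * h p.1.2) := by
              rw [ENNReal.ofReal_mul (le_of_lt (hg.2 _ hpos)), mul_assoc]
    _ = packVal (fun r => g r * h r) (Set.range e) := hval.symm
    _ ≤ packPre (fun r => g r * h r) Δ δ E := packVal_le_packPre hπ'

end ZPaperAux

/-- Lemma `lem:0-0`. For metric spaces `X`, `Y`, Hausdorff functions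
`g`, `h`, a scale `Δ` and any `E ⊆ X × Y`,
`pack^{gh}_{Δ,0}(E) ≥ pack^h_Δ(X) ⬝ inf_{x∈X} lboxm^g_0(E_x)`. -/
theorem stmt8 {X Y : Type*} [MetricSpace X] [MetricSpace Y] (g h : ℝ → ℝ)
    (hg : IsHausdorffFunction g) (hh : IsHausdorffFunction h)
    (Δ : Set ℝ) (hΔ : IsScale Δ) (E : Set (X × Y)) :
    packPre0 (fun r => g r * h r) Δ E ≥
      packMeasure h Δ (Set.univ : Set X) * ⨅ x : X, lboxPre0 g (sect E x) := by
  classical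
  rw [ge_iff_le]
  set L := ⨅ x : X, lboxPre0 g (sect E x) with hLdef
  set M := packMeasure h Δ (Set.univ : Set X) with hMdef
  set P := packPre0 (fun r => g r * h r) Δ E with hPdef
  have main : ∀ c : ℝ≥0, (c : ℝ≥0∞) < L → M * c ≤ P := by
    intro c hc
    set Xn : ℕ → Set X := fun n =>
      {x : X | ∀ r : ℝ, 0 < r → r ≤ 1 / (n + 1) →
        (c : ℝ≥0∞) < capacity r (sect E x) * ENNReal.ofReal (g r)} with hXn
    have hmono : Monotone Xn := by
      intro n m hnm x hx r hr0 hrm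
      refine hx r hr0 (hrm.trans ?_)
      have h1 : (0:ℝ) < (n:ℝ) + 1 := by positivity
      have h2 : ((n:ℝ) + 1) ≤ ((m:ℝ) + 1) := by
        have := (Nat.cast_le (α := ℝ)).2 hnm
        linarith
      exact one_div_le_one_div_of_le h1 h2
    have hcover : (Set.univ : Set X) ⊆ ⋃ n, Xn n := by
      intro x _
      have hx : (c : ℝ≥0∞) < lboxPre0 g (sect E x) :=
        hc.trans_le (iInf_le _ x)
      unfold lboxPre0 at hx
      have hev := eventually_lt_of_lt_liminf hx
      obtain ⟨u, hu, hIoo⟩ := mem_nhdsGT_iff_exists_Ioo_subset.1 hev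
      obtain ⟨n, hn⟩ := exists_nat_one_div_lt (show (0:ℝ) < u from hu)
      refine Set.mem_iUnion.2 ⟨n, fun r hr0 hrn => ?_⟩
      exact hIoo ⟨hr0, lt_of_le_of_lt hrn hn⟩
    have claimA : ∀ n, (c : ℝ≥0∞) * packPre0 h Δ (Xn n) ≤ P := by
      intro n
      rw [hPdef]
      show (c : ℝ≥0∞) * packPre0 h Δ (Xn n)
        ≤ ⨅ (δ : ℝ) (_ : 0 < δ), packPre (fun r => g r * h r) Δ δ E
      refine le_iInf₂ fun δ hδ => ?_
      have hn1 : (0:ℝ) < 1 / ((n:ℝ) + 1) := by positivity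
      have hδ' : (0:ℝ) < min δ (1 / ((n:ℝ) + 1)) := lt_min hδ hn1
      calc (c : ℝ≥0∞) * packPre0 h Δ (Xn n)
          ≤ (c : ℝ≥0∞) * packPre h Δ (min δ (1 / ((n:ℝ) + 1))) (Xn n) :=
            mul_le_mul_right (ZPaperAux.packPre0_le hδ') _
        _ ≤ packPre (fun r => g r * h r) Δ δ E := by
            refine ZPaperAux.lift_le hg c (min_le_left _ _) ?_
            intro x hx r hr0 hr
            exact hx r hr0 (hr.trans (min_le_right _ _))
    letI : MeasurableSpace X := borel X
    haveI : BorelSpace X := ⟨rfl⟩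
    have hborel : (borel X : MeasurableSpace X)
        ≤ (ZPaperAux.pm h Δ : MeasureTheory.OuterMeasure X).caratheodory :=
      (ZPaperAux.pm_isMetric).borel_le_caratheodory
    have hmeas : ∀ n, MeasurableSet (closure (Xn n)) :=
      fun n => isClosed_closure.measurableSet
    have huniv : (Set.univ : Set X) = ⋃ n, closure (Xn n) := by
      refine subset_antisymm ?_ (Set.subset_univ _)
      exact hcover.trans (Set.iUnion_mono fun n => subset_closure)
    have hMle : M ≤ ⨆ n, packPre0 h Δ (Xn n) := by
      have h1 : M = (ZPaperAux.pm h Δ : MeasureTheory.OuterMeasure X) Set.univ :=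
        ZPaperAux.pm_eq _
      have hmono' : Monotone fun n => closure (Xn n) :=
        fun i j hij => closure_mono (hmono hij)
      calc M = (ZPaperAux.pm h Δ : MeasureTheory.OuterMeasure X)
            (⋃ n, closure (Xn n)) := by rw [h1, ← huniv]
        _ = (ZPaperAux.pm h Δ).toMeasure hborel (⋃ n, closure (Xn n)) :=
            (MeasureTheory.toMeasure_apply _ _ (MeasurableSet.iUnion hmeas)).symm
        _ = ⨆ n, (ZPaperAux.pm h Δ).toMeasure hborel (closure (Xn n)) :=
            Directed.measure_iUnion hmono'.directed_le
        _ ≤ ⨆ n, packPre0 h Δ (Xn n) := by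
            refine iSup_mono fun n => ?_
            rw [MeasureTheory.toMeasure_apply _ _ (hmeas n)]
            exact (MeasureTheory.OuterMeasure.ofFunction_le _).trans
              ZPaperAux.packPre0_closure_le
    calc M * c = c * M := mul_comm _ _
      _ ≤ c * ⨆ n, packPre0 h Δ (Xn n) := mul_le_mul_right hMle _
      _ = ⨆ n, (c : ℝ≥0∞) * packPre0 h Δ (Xn n) := ENNReal.mul_iSup _ _
      _ ≤ P := iSup_le claimA
  have hLs : L = ⨆ (c : ℝ≥0) (_ : (c : ℝ≥0∞) < L), (c : ℝ≥0∞) := by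
    refine le_antisymm (ENNReal.le_of_forall_nnreal_lt fun r hr => ?_)
      (iSup₂_le fun c hc => hc.le)
    exact le_iSup₂ (f := fun (c : ℝ≥0) (_ : (c : ℝ≥0∞) < L) => (c : ℝ≥0∞)) r hr
  calc M * L = M * ⨆ (c : ℝ≥0) (_ : (c : ℝ≥0∞) < L), (c : ℝ≥0∞) := by rw [← hLs]
    _ = ⨆ (c : ℝ≥0), M * ⨆ (_ : (c : ℝ≥0∞) < L), (c : ℝ≥0∞) := ENNReal.mul_iSup _ _
    _ = ⨆ (c : ℝ≥0) (_ : (c : ℝ≥0∞) < L), M * (c : ℝ≥0∞) := by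
        refine iSup_congr fun c => ENNReal.mul_iSup _ _
    _ ≤ P := iSup₂_le main
end

section
/- Let X be a metric space, g a Hausdorff function and E ⊆ X. Then lpack^g_0(E) = 0 if and only if lboxm^g_0(E) = 0. -/
open Filter MeasureTheory Set
open scoped ENNReal NNReal Topology

open Filter MeasureTheory Set ZPaper
open scoped ENNReal NNReal Topology


section Aux
variable {X : Type*} [MetricSpace X]

/-- Finsets of separated points in `E` bound capacity from below. -/
lemma card_le_capacity {E : Set X} {r : ℝ} {F : Finset X}
    (h : ↑F ⊆ E ∧ ∀ x ∈ F, ∀ y ∈ F, x ≠ y → r < dist x y) :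
    (F.card : ℝ≥0∞) ≤ capacity r E :=
  le_iSup₂ (f := fun (F : Finset X)
    (_ : ↑F ⊆ E ∧ ∀ x ∈ F, ∀ y ∈ F, x ≠ y → r < dist x y) => (F.card : ℝ≥0∞)) F h

lemma tsum_fiber_le (g : ℝ → ℝ) {E : Set X}
    {π : Set (X × ℝ)} (hπ : IsPackingOf π E) (ρ : ℝ) :
    ∑' p : (π ∩ {p : X × ℝ | p.2 = ρ} : Set (X × ℝ)), ENNReal.ofReal (g (p : X × ℝ).2)
      ≤ capacity ρ E * ENNReal.ofReal (g ρ) := by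
  classical
  set A : Set (X × ℝ) := π ∩ {p | p.2 = ρ} with hA
  have hval : ∀ p : A, ENNReal.ofReal (g (p : X × ℝ).2) = ENNReal.ofReal (g ρ) := by
    rintro ⟨p, hp⟩; rw [show p.2 = ρ from hp.2]
  rw [tsum_congr hval, ENNReal.tsum_eq_iSup_sum]
  refine iSup_le fun F => ?_
  rw [Finset.sum_const, nsmul_eq_mul]
  refine mul_le_mul_left ?_ _
  set F' : Finset X := F.image (fun p : A => (p : X × ℝ).1) with hF'
  have hinj : Set.InjOn (fun p : A => (p : X × ℝ).1) ↑F := by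
    rintro ⟨p, hp⟩ - ⟨q, hq⟩ - h
    exact Subtype.ext (Prod.ext h (hp.2.trans hq.2.symm))
  have hcard : F'.card = F.card := Finset.card_image_of_injOn hinj
  have hcond : ↑F' ⊆ E ∧ ∀ x ∈ F', ∀ y ∈ F', x ≠ y → ρ < dist x y := by
    constructor
    · rintro x hx
      simp only [hF', Finset.coe_image, Set.mem_image, Finset.mem_coe] at hx
      obtain ⟨p, -, rfl⟩ := hx
      exact hπ.2 _ p.2.1
    · intro x hx y hy hxy
      simp only [hF', Finset.mem_image] at hx hy
      obtain ⟨p, -, rfl⟩ := hx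
      obtain ⟨q, -, rfl⟩ := hy
      have hne : (p : X × ℝ) ≠ (q : X × ℝ) := fun h => hxy (congrArg Prod.fst h)
      have := hπ.1.2 _ p.2.1 _ q.2.1 hne
      rwa [p.2.2] at this
  calc (F.card : ℝ≥0∞) = (F'.card : ℝ≥0∞) := by rw [hcard]
    _ ≤ capacity ρ E := card_le_capacity hcond

end Aux

/-- Proposition `lem:00`. For a Hausdorff function `g` and any
`E ⊆ X`, `lpack^g_0(E) = 0` iff `lboxm^g_0(E) = 0`. -/
theorem stmt14 {X : Type*} [MetricSpace X] (g : ℝ → ℝ) (hg : IsHausdorffFunction g)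
    (E : Set X) : lpackPre0 g E = 0 ↔ lboxPre0 g E = 0 := by
  classical
  constructor
  · -- lpack = 0 → lbox = 0
    intro h
    by_contra hbox
    have hpos : 0 < lboxPre0 g E := pos_iff_ne_zero.2 hbox
    obtain ⟨c, hc0, hclt⟩ := exists_between hpos
    simp only [lboxPre0] at hclt
    have hev : ∀ᶠ δ in 𝓝[>] (0:ℝ), c < capacity δ E * ENNReal.ofReal (g δ) :=
      eventually_lt_of_lt_liminf hclt
    rw [Filter.eventually_iff] at hev
    obtain ⟨a, ha, hsub⟩ := mem_nhdsGT_iff_exists_Ioo_subset.1 hev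
    have hle : c ≤ lpackPre0 g E := by
      refine le_iInf₂ fun Δ hΔ => le_iInf₂ fun δ hδ => ?_
      obtain ⟨r, hrΔ, hrdist⟩ := Metric.mem_closure_iff.1 hΔ.2 (min a δ) (lt_min ha hδ)
      have hr0 : 0 < r := hΔ.1 hrΔ
      have hrlt : r < min a δ := by
        rwa [Real.dist_eq, abs_sub_comm, sub_zero, abs_of_pos hr0] at hrdist
      have hcf : c < capacity r E * ENNReal.ofReal (g r) :=
        hsub ⟨hr0, hrlt.trans_le (min_le_left _ _)⟩
      rw [capacity] at hcf
      simp only [ENNReal.iSup_mul] at hcf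
      obtain ⟨F, hcf⟩ := lt_iSup_iff.1 hcf
      obtain ⟨hFcond, hcF⟩ := lt_iSup_iff.1 hcf
      set π : Set (X × ℝ) := ↑(F.image (fun x => (x, r))) with hπdef
      have hπmem : ∀ p ∈ π, ∃ x ∈ F, (x, r) = p := by
        intro p hp
        simpa [hπdef] using hp
      have hpack : IsScaledPacking Δ δ π E := by
        refine ⟨⟨⟨?_, ?_⟩, ?_⟩, ?_⟩
        · intro p hp
          obtain ⟨x, -, rfl⟩ := hπmem p hp; exact hr0
        · intro p hp q hq hne
          obtain ⟨x, hx, rfl⟩ := hπmem p hp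
          obtain ⟨y, hy, rfl⟩ := hπmem q hq
          have hxy : x ≠ y := fun hexy => hne (by rw [hexy])
          exact hFcond.2 x hx y hy hxy
        · intro p hp
          obtain ⟨x, hx, rfl⟩ := hπmem p hp; exact hFcond.1 hx
        · intro p hp
          obtain ⟨x, -, rfl⟩ := hπmem p hp
          exact ⟨hrΔ, (hrlt.trans_le (min_le_right _ _)).le⟩
      have hval : packVal g π = (F.card : ℝ≥0∞) * ENNReal.ofReal (g r) := by
        rw [packVal, hπdef,
          Finset.tsum_subtype' (F.image (fun x => (x, r)))
            (fun p : X × ℝ => ENNReal.ofReal (g p.2)),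
          Finset.sum_image (fun x _ y _ hexy => (Prod.mk.injEq _ _ _ _ ▸ hexy).1)]
        simp [Finset.sum_const, nsmul_eq_mul]
      have hlepre : packVal g π ≤ packPre g Δ δ E :=
        le_iSup₂ (f := fun (π : Set (X × ℝ)) (_ : IsScaledPacking Δ δ π E) =>
          packVal g π) π hpack
      exact le_of_lt (lt_of_lt_of_le (hval ▸ hcF) hlepre)
    rw [h] at hle
    exact hc0.not_ge hle
  · -- lbox = 0 → lpack = 0
    intro h
    refine le_antisymm (ENNReal.le_of_forall_pos_le_add fun ε hε _ => ?_) zero_le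
    rw [zero_add]
    obtain ⟨δ', hδ'pos, hδ'sum⟩ :=
      ENNReal.exists_pos_sum_of_countable (ENNReal.coe_ne_zero.2 hε.ne') ℕ
    have hfr : ∀ n : ℕ, ∃ r : ℝ,
        (capacity r E * ENNReal.ofReal (g r) < δ' n) ∧ r ∈ Ioo (0:ℝ) (1/((n:ℝ)+1)) := by
      intro n
      have hlim : lboxPre0 g E < (δ' n : ℝ≥0∞) := by
        rw [h]; exact ENNReal.coe_pos.2 (hδ'pos n)
      simp only [lboxPre0] at hlim
      have hfreq : ∃ᶠ r in 𝓝[>] (0:ℝ), capacity r E * ENNReal.ofReal (g r) < δ' n :=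
        frequently_lt_of_liminf_lt (h := hlim)
      have hmem : Ioo (0:ℝ) (1/((n:ℝ)+1)) ∈ 𝓝[>] (0:ℝ) :=
        Ioo_mem_nhdsGT_of_mem ⟨le_refl 0, by positivity⟩
      exact (hfreq.and_eventually (eventually_of_mem hmem fun x hx => hx)).exists
    choose u hu1 hu2 using hfr
    have hscale : IsScale (Set.range u) := by
      constructor
      · rintro _ ⟨n, rfl⟩; exact (hu2 n).1
      · have htend : Tendsto u atTop (𝓝 0) :=
          squeeze_zero (fun n => (hu2 n).1.le) (fun n => (hu2 n).2.le)
            tendsto_one_div_add_atTop_nhds_zero_nat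
        exact mem_closure_of_tendsto htend (Eventually.of_forall fun n => Set.mem_range_self n)
    calc lpackPre0 g E ≤ packPre0 g (Set.range u) E := iInf₂_le _ hscale
      _ ≤ packPre g (Set.range u) 1 E := iInf₂_le 1 one_pos
      _ ≤ ∑' n, (δ' n : ℝ≥0∞) := by
          refine iSup₂_le fun π hπ => ?_
          have hcover : π ⊆ ⋃ n, (π ∩ {p : X × ℝ | p.2 = u n}) := by
            intro p hp
            obtain ⟨n, hn⟩ := (hπ.2 p hp).1
            exact Set.mem_iUnion.2 ⟨n, hp, hn.symm⟩
          calc packVal g π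
              = ∑' p : π, ENNReal.ofReal (g (p : X × ℝ).2) := rfl
            _ ≤ ∑' p : (⋃ n, (π ∩ {p : X × ℝ | p.2 = u n}) : Set (X × ℝ)),
                  ENNReal.ofReal (g (p : X × ℝ).2) :=
                ENNReal.tsum_mono_subtype (fun p : X × ℝ => ENNReal.ofReal (g p.2)) hcover
            _ ≤ ∑' n, ∑' p : (π ∩ {p : X × ℝ | p.2 = u n} : Set (X × ℝ)),
                  ENNReal.ofReal (g (p : X × ℝ).2) :=
                ENNReal.tsum_iUnion_le_tsum (fun p : X × ℝ => ENNReal.ofReal (g p.2))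
                  (fun n => π ∩ {p : X × ℝ | p.2 = u n})
            _ ≤ ∑' n, (δ' n : ℝ≥0∞) :=
                ENNReal.tsum_le_tsum fun n =>
                  (tsum_fiber_le g hπ.1 (u n)).trans (hu1 n).le
      _ ≤ ε := hδ'sum.le
end
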